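/- arXiv:2305.08126 — 3 statements merged into one kernel-verified Lean document; each statement's English description precedes it below -/
import Mathlib

section
/- Achievability for maximum distortion (Lemma 1): With sufficient common randomness, the rate–distortion region for the maximum distortion d_max coincides with that for the average distortion d_avg: for every rate R and distortion level ε, the pair (R,ε) lies in the closure of the set of pairs achievable for d_max by (2^{nR}, 2^{nR₀}, n) stochastic codes for some common-randomness rate R₀ ≥ 0 if and only if (R,ε) lies in the closure of the set of pairs achievable for d_avg by (2^{nR}, n) deterministic codes. -/
open Finset Filter Topology Classical

noncomputable section

/-- `p` is a probability mass function on a finite type. -/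
def IsPMF {α : Type*} [Fintype α] (p : α → ℝ) : Prop :=
  (∀ a, 0 ≤ p a) ∧ ∑ a, p a = 1

/-- A learning rule assigns a pmf on models to every dataset. -/
def IsRule {S H : Type*} [Fintype H] (Q : S → H → ℝ) : Prop :=
  ∀ s, IsPMF (Q s)

/-- True loss `L_c(q)` of a belief `q` over models on concept `c`. -/
def trueLoss {C H : Type*} [Fintype H] (L : C → H → ℝ) (c : C) (q : H → ℝ) : ℝ :=
  ∑ h, q h * L c h

/-- Semantic distortion `d_sem(Q, Q̂)` between two learning rules. -/
def dsem {C S H : Type*} [Fintype C] [Fintype S] [Fintype H]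
    (PCS : C → S → ℝ) (L : C → H → ℝ) (Q Qhat : S → H → ℝ) : ℝ :=
  ∑ c, ∑ s, PCS c s * (trueLoss L c (Qhat s) - trueLoss L c (Q s))

/-- Number of messages `⌈2^{nR}⌉` of a `(2^{nR}, n)` code. -/
def numMsg (R : ℝ) (n : ℕ) : ℕ := ⌈(2 : ℝ) ^ ((n : ℝ) * R)⌉₊

/-- Conditional law `Q̂ᵢ(h|s) = P(Ĥᵢ = h | Sᵢ = s)` of the `i`-th decoded model,
induced by a deterministic blocklength-`n` map `Sⁿ → Hⁿ` when `S₁,…,Sₙ` are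
i.i.d. with law `PS`. -/
def inducedRule {S H : Type*} [Fintype S] (PS : S → ℝ) {n : ℕ}
    (code : (Fin n → S) → (Fin n → H)) (i : Fin n) : S → H → ℝ := fun s h =>
  (∑ sn : Fin n → S, if sn i = s ∧ code sn i = h then ∏ j, PS (sn j) else 0) / PS s

/-- Conditional law `Q̂ᵢ(h|s) = P(Ĥᵢ = h | Sᵢ = s)` induced by a stochastic
blocklength-`n` code with common randomness `ω ∼ pw` independent of `Sⁿ`. -/
def inducedRuleStoch {S H Ω : Type*} [Fintype S] [Fintype Ω] (PS : S → ℝ)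
    (pw : Ω → ℝ) {n : ℕ} (code : (Fin n → S) → Ω → (Fin n → H)) (i : Fin n) :
    S → H → ℝ := fun s h =>
  (∑ ω : Ω, ∑ sn : Fin n → S,
      if sn i = s ∧ code sn ω i = h then pw ω * ∏ j, PS (sn j) else 0) / PS s

/-- Average per-model distortion `d_avg` of a deterministic blocklength-`n` code. -/
def davgCode {C S H : Type*} [Fintype C] [Fintype S] [Fintype H]
    (PCS : C → S → ℝ) (PS : S → ℝ) (L : C → H → ℝ) (Q : S → H → ℝ) {n : ℕ}
    (code : (Fin n → S) → (Fin n → H)) : ℝ :=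
  (1 / (n : ℝ)) * ∑ i : Fin n, dsem PCS L Q (inducedRule PS code i)

/-- Maximum per-model distortion `d_max` of a stochastic blocklength-`n` code. -/
def dmaxCode {C S H Ω : Type*} [Fintype C] [Fintype S] [Fintype H] [Fintype Ω]
    (PCS : C → S → ℝ) (PS : S → ℝ) (L : C → H → ℝ) (Q : S → H → ℝ)
    (pw : Ω → ℝ) {n : ℕ} (code : (Fin n → S) → Ω → (Fin n → H)) : ℝ :=
  ⨆ i : Fin n, dsem PCS L Q (inducedRuleStoch PS pw code i)

/-- `(R, ε)` is achievable for `d_avg` by deterministic `(2^{nR}, n)` codes. -/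
def AchAvg {C S H : Type*} [Fintype C] [Fintype S] [Fintype H]
    (PCS : C → S → ℝ) (PS : S → ℝ) (L : C → H → ℝ) (Q : S → H → ℝ)
    (R ε : ℝ) : Prop :=
  ∃ (f : ∀ n : ℕ, (Fin n → S) → Fin (numMsg R n))
    (g : ∀ n : ℕ, Fin (numMsg R n) → (Fin n → H)) (l : ℝ),
      Tendsto (fun n : ℕ => davgCode PCS PS L Q (fun sn => g n (f n sn)))
        atTop (nhds l) ∧ l < ε

/-- `(R, ε)` is achievable for `d_max` by stochastic `(2^{nR}, 2^{nR₀}, n)` codes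
with some common-randomness rate `R₀ ≥ 0`. -/
def AchMax {C S H : Type*} [Fintype C] [Fintype S] [Fintype H]
    (PCS : C → S → ℝ) (PS : S → ℝ) (L : C → H → ℝ) (Q : S → H → ℝ)
    (R ε : ℝ) : Prop :=
  ∃ R₀ : ℝ, 0 ≤ R₀ ∧
    ∃ (f : ∀ n : ℕ, (Fin n → S) → Fin (numMsg R₀ n) → Fin (numMsg R n))
      (g : ∀ n : ℕ, Fin (numMsg R n) → Fin (numMsg R₀ n) → (Fin n → H))
      (pw : ∀ n : ℕ, Fin (numMsg R₀ n) → ℝ),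
        (∀ n, IsPMF (pw n)) ∧
        ∃ l : ℝ,
          Tendsto (fun n : ℕ => dmaxCode PCS PS L Q (pw n)
              (fun sn ω => g n (f n sn ω) ω)) atTop (nhds l) ∧ l < ε


/-- summation factorization lemma -/
lemma sum_factor {S : Type*} [Fintype S] (PS : S → ℝ) (hPS1 : ∑ s, PS s = 1)
    {n m : ℕ} (T : Fin m → Fin n) (hT : Function.Injective T)
    (F : (Fin m → S) → ℝ) :
    ∑ sn : Fin n → S, F (fun r => sn (T r)) * ∏ j, PS (sn j)
      = ∑ u : Fin m → S, F u * ∏ r, PS (u r) := by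
  classical
  set p : Fin n → Prop := fun j => ∃ r, T r = j with hp
  set e := Equiv.piEquivPiSubtypeProd p (fun _ : Fin n => S) with he
  rw [← Equiv.sum_comp e.symm (fun sn : Fin n → S => F (fun r => sn (T r)) * ∏ j, PS (sn j))]
  rw [Fintype.sum_prod_type]
  have key : ∀ (x : {j // p j} → S) (y : {j // ¬ p j} → S),
      F (fun r => e.symm (x, y) (T r)) * ∏ j, PS (e.symm (x, y) j)
        = (F (fun r => x ⟨T r, ⟨r, rfl⟩⟩) * ∏ j : {j // p j}, PS (x j))
            * ∏ j : {j // ¬ p j}, PS (y j) := by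
    intro x y
    have hsymm : ∀ j, e.symm (x, y) j = if h : p j then x ⟨j, h⟩ else y ⟨j, h⟩ := by
      intro j
      rw [he]; rfl
    have h1 : (fun r => e.symm (x, y) (T r)) = fun r => x ⟨T r, ⟨r, rfl⟩⟩ := by
      funext r
      rw [hsymm]
      exact dif_pos ⟨r, rfl⟩
    have h2 : ∏ j, PS (e.symm (x, y) j)
        = (∏ j : {j // p j}, PS (x j)) * ∏ j : {j // ¬ p j}, PS (y j) := by
      rw [← Fintype.prod_subtype_mul_prod_subtype p (fun j => PS (e.symm (x, y) j))]
      congr 1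
      · exact Fintype.prod_congr _ _ fun j => by rw [hsymm]; rw [dif_pos j.2]
      · exact Fintype.prod_congr _ _ fun j => by rw [hsymm]; rw [dif_neg j.2]
    rw [h1, h2]; ring
  calc ∑ x, ∑ y, F (fun r => e.symm (x, y) (T r)) * ∏ j, PS (e.symm (x, y) j)
      = ∑ x : {j // p j} → S, (F (fun r => x ⟨T r, ⟨r, rfl⟩⟩) * ∏ j : {j // p j}, PS (x j))
          * ∑ y : {j // ¬ p j} → S, ∏ j : {j // ¬ p j}, PS (y j) := by
        refine Finset.sum_congr rfl fun x _ => ?_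
        rw [Finset.mul_sum]
        exact Finset.sum_congr rfl fun y _ => key x y
    _ = ∑ x : {j // p j} → S, F (fun r => x ⟨T r, ⟨r, rfl⟩⟩) * ∏ j : {j // p j}, PS (x j) := by
        have : ∑ y : {j // ¬ p j} → S, ∏ j : {j // ¬ p j}, PS (y j) = 1 := by
          rw [← Fintype.piFinset_univ, ← Finset.prod_univ_sum]
          simp [hPS1]
        simp [this]
    _ = ∑ u : Fin m → S, F u * ∏ r, PS (u r) := by
        set eT : Fin m ≃ {j // p j} := Equiv.ofInjective T hT with heT
        rw [← Equiv.sum_comp (Equiv.arrowCongr eT (Equiv.refl S))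
          (fun x : {j // p j} → S => F (fun r => x ⟨T r, ⟨r, rfl⟩⟩) * ∏ j : {j // p j}, PS (x j))]
        refine Finset.sum_congr rfl fun u _ => ?_
        have hx : ∀ r, (Equiv.arrowCongr eT (Equiv.refl S) u) ⟨T r, ⟨r, rfl⟩⟩ = u r := by
          intro r
          show u (eT.symm ⟨T r, ⟨r, rfl⟩⟩) = u r
          rw [heT]
          exact congrArg u (Equiv.ofInjective_symm_apply hT r)
        congr 1
        · exact congrArg F (funext hx)
        · rw [← Equiv.prod_comp eT (fun j : {j // p j} =>
            PS ((Equiv.arrowCongr eT (Equiv.refl S) u) j))]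
          refine Fintype.prod_congr _ _ fun r => ?_
          show PS (u (eT.symm (eT r))) = PS (u r)
          rw [Equiv.symm_apply_apply]

section Main

variable {C S H : Type*} [Fintype C] [Fintype S] [Fintype H]
variable {PCS : C → S → ℝ} {PS : S → ℝ} {L : C → H → ℝ} {Q : S → H → ℝ}

lemma marg (hPS1 : ∑ s, PS s = 1) {n : ℕ} (i : Fin n) (s : S) :
    ∑ sn : Fin n → S, (if sn i = s then ∏ j, PS (sn j) else 0) = PS s := by
  classical
  have h := sum_factor PS hPS1 (fun _ : Fin 1 => i) (fun a b _ => Subsingleton.elim a b)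
    (fun u => if u 0 = s then 1 else 0)
  simp only [boole_mul] at h
  rw [h]
  rw [← Equiv.sum_comp (Equiv.funUnique (Fin 1) S).symm
      (fun u : Fin 1 → S => if u 0 = s then ∏ r, PS (u r) else 0)]
  simp [Equiv.funUnique, Fin.prod_univ_one]

lemma inducedRule_nonneg (hPSnn : ∀ s, 0 ≤ PS s) {n : ℕ}
    (code : (Fin n → S) → (Fin n → H)) (i : Fin n) (s : S) (h : H) :
    0 ≤ inducedRule PS code i s h := by
  apply div_nonneg _ (hPSnn s)
  apply Finset.sum_nonneg
  intro sn _
  split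
  · exact Finset.prod_nonneg fun j _ => hPSnn (sn j)
  · exact le_refl 0

lemma inducedRule_mass (hPS1 : ∑ s, PS s = 1) {n : ℕ}
    (code : (Fin n → S) → (Fin n → H)) (i : Fin n) (s : S) :
    ∑ h, inducedRule PS code i s h = PS s / PS s := by
  classical
  unfold inducedRule
  rw [← Finset.sum_div]
  congr 1
  rw [Finset.sum_comm]
  rw [← marg hPS1 i s]
  refine Finset.sum_congr rfl fun sn _ => ?_
  by_cases hs : sn i = s
  · simp [hs]
  · simp [hs]

lemma inducedRule_mass_le_one (hPSnn : ∀ s, 0 ≤ PS s) (hPS1 : ∑ s, PS s = 1) {n : ℕ}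
    (code : (Fin n → S) → (Fin n → H)) (i : Fin n) (s : S) :
    ∑ h, inducedRule PS code i s h ≤ 1 := by
  rw [inducedRule_mass hPS1]
  rcases eq_or_ne (PS s) 0 with h0 | h0
  · simp [h0]
  · rw [div_self h0]

lemma trueLoss_nonneg (hL : ∀ c h, L c h ∈ Set.Icc (0:ℝ) 1) {q : H → ℝ}
    (hq : ∀ h, 0 ≤ q h) (c : C) : 0 ≤ trueLoss L c q :=
  Finset.sum_nonneg fun h _ => mul_nonneg (hq h) (hL c h).1

lemma trueLoss_le_one (hL : ∀ c h, L c h ∈ Set.Icc (0:ℝ) 1) {q : H → ℝ}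
    (hq : ∀ h, 0 ≤ q h) (hq1 : ∑ h, q h ≤ 1) (c : C) : trueLoss L c q ≤ 1 := by
  calc trueLoss L c q ≤ ∑ h, q h :=
        Finset.sum_le_sum fun h _ => by
          simpa using mul_le_of_le_one_right (hq h) (hL c h).2
    _ ≤ 1 := hq1

/-- Bounds on dsem when `Q̂` is subnormalized and nonnegative. -/
lemma dsem_bounds (hPCSnn : ∀ c s, 0 ≤ PCS c s) (hPCS1 : ∑ c, ∑ s, PCS c s = 1)
    (hL : ∀ c h, L c h ∈ Set.Icc (0:ℝ) 1) (hQ : IsRule Q)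
    {Qh : S → H → ℝ} (hnn : ∀ s h, 0 ≤ Qh s h) (hm : ∀ s, ∑ h, Qh s h ≤ 1) :
    dsem PCS L Q Qh ∈ Set.Icc (-1 : ℝ) 1 := by
  have hterm : ∀ c s, PCS c s * (trueLoss L c (Qh s) - trueLoss L c (Q s))
      ∈ Set.Icc (-(PCS c s)) (PCS c s) := by
    intro c s
    constructor
    · have h1 : trueLoss L c (Qh s) - trueLoss L c (Q s) ≥ -1 := by
        have := trueLoss_nonneg hL (hnn s) c
        have := trueLoss_le_one hL (fun h => ((hQ s).1 h)) (le_of_eq (hQ s).2) c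
        linarith
      nlinarith [hPCSnn c s]
    · have h1 : trueLoss L c (Qh s) - trueLoss L c (Q s) ≤ 1 := by
        have := trueLoss_le_one hL (hnn s) (hm s) c
        have := trueLoss_nonneg hL (fun h => ((hQ s).1 h)) c
        linarith
      nlinarith [hPCSnn c s]
  constructor
  · have : -(1:ℝ) = -∑ c, ∑ s, PCS c s := by rw [hPCS1]
    rw [this]
    unfold dsem
    rw [← Finset.sum_neg_distrib]
    refine Finset.sum_le_sum fun c _ => ?_
    rw [← Finset.sum_neg_distrib]
    exact Finset.sum_le_sum fun s _ => (hterm c s).1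
  · unfold dsem
    rw [← hPCS1]
    refine Finset.sum_le_sum fun c _ => Finset.sum_le_sum fun s _ => (hterm c s).2

/-- dsem is affine: mixtures of rules give mixtures of distortions. -/
lemma dsem_mix {ι : Type*} [Fintype ι] (w : ι → ℝ) (hw : ∑ t, w t = 1)
    (Qh : ι → S → H → ℝ) :
    dsem PCS L Q (fun s h => ∑ t, w t * Qh t s h)
      = ∑ t, w t * dsem PCS L Q (Qh t) := by
  unfold dsem
  have htL : ∀ c s, trueLoss L c (fun h => ∑ t, w t * Qh t s h)
      = ∑ t, w t * trueLoss L c (Qh t s) := by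
    intro c s
    unfold trueLoss
    simp only [Finset.sum_mul]
    rw [Finset.sum_comm]
    refine Finset.sum_congr rfl fun t _ => ?_
    rw [Finset.mul_sum]
    refine Finset.sum_congr rfl fun h _ => by ring
  calc ∑ c, ∑ s, PCS c s * (trueLoss L c (fun h => ∑ t, w t * Qh t s h) - trueLoss L c (Q s))
      = ∑ c, ∑ s, ∑ t, w t * (PCS c s * (trueLoss L c (Qh t s) - trueLoss L c (Q s))) := by
        refine Finset.sum_congr rfl fun c _ => Finset.sum_congr rfl fun s _ => ?_
        rw [htL c s]
        have h2 : ∑ t, w t * trueLoss L c (Qh t s) - trueLoss L c (Q s)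
            = ∑ t, w t * (trueLoss L c (Qh t s) - trueLoss L c (Q s)) := by
          have h4 : ∑ t, w t * (trueLoss L c (Qh t s) - trueLoss L c (Q s))
              = (∑ t, w t * trueLoss L c (Qh t s)) - (∑ t, w t) * trueLoss L c (Q s) := by
            rw [Finset.sum_mul, ← Finset.sum_sub_distrib]
            exact Finset.sum_congr rfl fun t _ => by ring
          rw [h4, hw, one_mul]
        rw [h2, Finset.mul_sum]
        exact Finset.sum_congr rfl fun t _ => by ring
    _ = ∑ t, w t * dsem PCS L Q (Qh t) := by
        rw [show (∑ c, ∑ s, ∑ t, w t * (PCS c s * (trueLoss L c (Qh t s) - trueLoss L c (Q s))))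
            = ∑ c, ∑ t, ∑ s, w t * (PCS c s * (trueLoss L c (Qh t s) - trueLoss L c (Q s)))
          from Finset.sum_congr rfl fun c _ => Finset.sum_comm]
        rw [Finset.sum_comm]
        unfold dsem
        refine Finset.sum_congr rfl fun t _ => ?_
        rw [Finset.mul_sum]
        refine Finset.sum_congr rfl fun c _ => ?_
        rw [Finset.mul_sum]

/-- inducedRuleStoch is the pw-mixture of the deterministic induced rules. -/
lemma stoch_decomp {Ω : Type*} [Fintype Ω] (pw : Ω → ℝ) {n : ℕ}
    (code : (Fin n → S) → Ω → (Fin n → H)) (i : Fin n) :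
    inducedRuleStoch PS pw code i
      = fun s h => ∑ ω, pw ω * inducedRule PS (fun sn => code sn ω) i s h := by
  classical
  funext s h
  unfold inducedRuleStoch inducedRule
  have hnum : ∀ ω, ∑ sn : Fin n → S,
      (if sn i = s ∧ code sn ω i = h then pw ω * ∏ j, PS (sn j) else 0)
      = pw ω * ∑ sn : Fin n → S,
          (if sn i = s ∧ code sn ω i = h then ∏ j, PS (sn j) else 0) := by
    intro ω
    rw [Finset.mul_sum]
    exact Finset.sum_congr rfl fun sn _ => by rw [mul_ite, mul_zero]
  rcases eq_or_ne (PS s) 0 with h0 | h0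
  · simp [h0]
  · rw [Finset.sum_div]
    refine Finset.sum_congr rfl fun ω _ => ?_
    rw [hnum ω, mul_div_assoc]

/-- If a code's `i`-th output factors through an injective inclusion of coordinates,
its induced rule is that of the subcode. -/
lemma inducedRule_subcode (hPS1 : ∑ s, PS s = 1) {n m : ℕ}
    (T : Fin m → Fin n) (hT : Function.Injective T)
    (code : (Fin n → S) → (Fin n → H)) (D : (Fin m → S) → (Fin m → H)) (r : Fin m)
    (hcode : ∀ sn, code sn (T r) = D (fun r' => sn (T r')) r) :
    inducedRule PS code (T r) = inducedRule PS D r := by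
  classical
  funext s h
  unfold inducedRule
  congr 1
  have key := sum_factor PS hPS1 T hT
    (fun u => if u r = s ∧ D u r = h then (1:ℝ) else 0)
  simp only [boole_mul] at key
  calc ∑ sn : Fin n → S, (if sn (T r) = s ∧ code sn (T r) = h then ∏ j, PS (sn j) else 0)
      = ∑ sn : Fin n → S,
          (if (fun r' => sn (T r')) r = s ∧ D (fun r' => sn (T r')) r = h
            then ∏ j, PS (sn j) else 0) := by
        refine Finset.sum_congr rfl fun sn _ => ?_
        rw [hcode sn]
    _ = ∑ u : Fin m → S, (if u r = s ∧ D u r = h then ∏ j, PS (u j) else 0) := key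

/-- dsem of the i-th stochastic induced rule is the mixture of deterministic dsems. -/
lemma dsem_stoch {Ω : Type*} [Fintype Ω] (pw : Ω → ℝ) (hpw : IsPMF pw) {n : ℕ}
    (code : (Fin n → S) → Ω → (Fin n → H)) (i : Fin n) :
    dsem PCS L Q (inducedRuleStoch PS pw code i)
      = ∑ ω, pw ω * dsem PCS L Q (inducedRule PS (fun sn => code sn ω) i) := by
  rw [stoch_decomp]
  exact dsem_mix pw hpw.2 _

lemma dsem_inducedRule_mem (hPCSnn : ∀ c s, 0 ≤ PCS c s) (hPCS1 : ∑ c, ∑ s, PCS c s = 1)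
    (hPSnn : ∀ s, 0 ≤ PS s) (hPS1 : ∑ s, PS s = 1)
    (hL : ∀ c h, L c h ∈ Set.Icc (0:ℝ) 1) (hQ : IsRule Q) {n : ℕ}
    (code : (Fin n → S) → (Fin n → H)) (i : Fin n) :
    dsem PCS L Q (inducedRule PS code i) ∈ Set.Icc (-1 : ℝ) 1 :=
  dsem_bounds hPCSnn hPCS1 hL hQ (fun s h => inducedRule_nonneg hPSnn code i s h)
    (fun s => inducedRule_mass_le_one hPSnn hPS1 code i s)

lemma dsem_inducedRuleStoch_mem (hPCSnn : ∀ c s, 0 ≤ PCS c s)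
    (hPCS1 : ∑ c, ∑ s, PCS c s = 1)
    (hPSnn : ∀ s, 0 ≤ PS s) (hPS1 : ∑ s, PS s = 1)
    (hL : ∀ c h, L c h ∈ Set.Icc (0:ℝ) 1) (hQ : IsRule Q)
    {Ω : Type*} [Fintype Ω] (pw : Ω → ℝ) (hpw : IsPMF pw) {n : ℕ}
    (code : (Fin n → S) → Ω → (Fin n → H)) (i : Fin n) :
    dsem PCS L Q (inducedRuleStoch PS pw code i) ∈ Set.Icc (-1 : ℝ) 1 := by
  rw [stoch_decomp]
  refine dsem_bounds hPCSnn hPCS1 hL hQ ?_ ?_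
  · intro s h
    exact Finset.sum_nonneg fun ω _ =>
      mul_nonneg (hpw.1 ω) (inducedRule_nonneg hPSnn _ i s h)
  · intro s
    rw [Finset.sum_comm]
    calc ∑ ω, ∑ h, pw ω * inducedRule PS (fun sn => code sn ω) i s h
        = ∑ ω, pw ω * ∑ h, inducedRule PS (fun sn => code sn ω) i s h := by
          exact Finset.sum_congr rfl fun ω _ => (Finset.mul_sum _ _ _).symm
      _ ≤ ∑ ω, pw ω * 1 := Finset.sum_le_sum fun ω _ => by
          have := inducedRule_mass_le_one hPSnn hPS1 (fun sn => code sn ω) i s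
          have h0 : 0 ≤ ∑ h, inducedRule PS (fun sn => code sn ω) i s h :=
            Finset.sum_nonneg fun h _ => inducedRule_nonneg hPSnn _ i s h
          nlinarith [hpw.1 ω]
      _ = ∑ ω, pw ω := Finset.sum_congr rfl fun ω _ => mul_one _
      _ = 1 := hpw.2

lemma numMsg_pos (R : ℝ) (n : ℕ) : 0 < numMsg R n :=
  Nat.ceil_pos.mpr (Real.rpow_pos_of_pos two_pos _)

lemma le_numMsg_one (n : ℕ) : max n 1 ≤ numMsg 1 n := by
  unfold numMsg
  have h2 : (2:ℝ) ^ ((n:ℝ) * 1) = ((2 ^ n : ℕ) : ℝ) := by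
    rw [mul_one, Real.rpow_natCast]
    push_cast
    ring
  rw [h2, Nat.ceil_natCast]
  exact max_le (Nat.lt_two_pow_self (n := n)).le (Nat.one_le_two_pow)

lemma sum_fin_indicator {N K : ℕ} (hK : K ≤ N) (G : ℕ → ℝ) :
    ∑ ω : Fin N, (if (ω : ℕ) < K then G ω else 0) = ∑ j ∈ Finset.range K, G j := by
  rw [Fin.sum_univ_eq_sum_range (fun j => if j < K then G j else 0) N]
  rw [← Finset.sum_filter]
  congr 1
  ext j
  simp only [Finset.mem_filter, Finset.mem_range]
  exact ⟨fun hj => hj.2, fun hj => ⟨lt_of_lt_of_le hj hK, hj⟩⟩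

/-- the common randomness pmf used for symmetrization -/
def unifPW (n : ℕ) : Fin (numMsg 1 n) → ℝ :=
  fun ω => if (ω : ℕ) < max n 1 then ((max n 1 : ℕ) : ℝ)⁻¹ else 0

lemma unifPW_isPMF (n : ℕ) : IsPMF (unifPW n) := by
  constructor
  · intro ω
    unfold unifPW
    split
    · positivity
    · exact le_refl 0
  · unfold unifPW
    rw [sum_fin_indicator (le_numMsg_one n) (fun _ => ((max n 1 : ℕ) : ℝ)⁻¹)]
    rw [Finset.sum_const, Finset.card_range, nsmul_eq_mul]
    rw [mul_inv_cancel₀]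
    positivity

/-- the cyclic shift permutation -/
def shiftPerm (n : ℕ) (hn : 0 < n) (k : ℕ) : Equiv.Perm (Fin n) :=
  haveI : NeZero n := ⟨hn.ne'⟩
  Equiv.addRight (⟨k % n, Nat.mod_lt k hn⟩ : Fin n)

lemma shift_rule {n : ℕ} (σ : Equiv.Perm (Fin n))
    (D : (Fin n → S) → (Fin n → H)) (i : Fin n) :
    inducedRule PS (fun sn j => D (fun j' => sn (σ.symm j')) (σ j)) i
      = inducedRule PS D (σ i) := by
  classical
  funext s h
  unfold inducedRule
  congr 1
  rw [← Equiv.sum_comp (Equiv.arrowCongr σ.symm (Equiv.refl S))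
    (fun sn : Fin n → S => if sn i = s ∧ D (fun j' => sn (σ.symm j')) (σ i) = h
      then ∏ j, PS (sn j) else 0)]
  refine Finset.sum_congr rfl fun u _ => ?_
  have h1 : (Equiv.arrowCongr σ.symm (Equiv.refl S)) u = fun j => u (σ j) := rfl
  rw [h1]
  have h2 : (fun j' => u (σ (σ.symm j'))) = u := by
    funext j'
    rw [Equiv.apply_symm_apply]
  rw [h2]
  have h3 : ∏ j, PS (u (σ j)) = ∏ j, PS (u j) := Equiv.prod_comp σ (fun j => PS (u j))
  rw [h3]


lemma shift_rule' {n : ℕ} (σ : Equiv.Perm (Fin n))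
    (D : (Fin n → S) → (Fin n → H)) (code' : (Fin n → S) → (Fin n → H))
    (hcode : ∀ sn, code' sn = fun j => D (fun j' => sn (σ.symm j')) (σ j)) (i : Fin n) :
    inducedRule PS code' i = inducedRule PS D (σ i) := by
  exact (congrArg (fun c => inducedRule PS c i) (funext hcode)).trans (shift_rule σ D i)


/-- total version of the shift permutation -/
def shiftPerm' (n k : ℕ) : Equiv.Perm (Fin n) :=
  if hn : 0 < n then shiftPerm n hn k else Equiv.refl _

/-- Average → Max achievability. -/
lemma avg_to_max {R ε : ℝ} (hach : AchAvg PCS PS L Q R ε) : AchMax PCS PS L Q R ε := by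
  classical
  obtain ⟨f, g, l, hl, hlε⟩ := hach
  refine ⟨1, zero_le_one,
    fun n sn ω => f n (fun j' => sn ((shiftPerm' n (ω : ℕ)).symm j')),
    fun n msg ω j => g n msg ((shiftPerm' n (ω : ℕ)) j),
    fun n => unifPW n, fun n => unifPW_isPMF n, l, ?_, hlε⟩
  have key : ∀ n : ℕ, dmaxCode PCS PS L Q (unifPW n)
      (fun sn ω => (fun j => g n (f n (fun j' => sn ((shiftPerm' n (ω : ℕ)).symm j')))
        ((shiftPerm' n (ω : ℕ)) j)))
      = davgCode PCS PS L Q (fun sn => g n (f n sn)) := by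
    intro n
    rcases Nat.eq_zero_or_pos n with hn0 | hn
    · subst hn0
      rw [dmaxCode, Real.iSup_of_isEmpty, davgCode]
      simp
    · haveI : NeZero n := ⟨hn.ne'⟩
      have hsp : ∀ k : ℕ, shiftPerm' n k = shiftPerm n hn k := fun k => dif_pos hn
      have hdsem : ∀ i : Fin n, dsem PCS L Q (inducedRuleStoch PS (unifPW n)
          (fun sn ω => (fun j => g n (f n (fun j' => sn ((shiftPerm' n (ω : ℕ)).symm j')))
            ((shiftPerm' n (ω : ℕ)) j))) i)
          = davgCode PCS PS L Q (fun sn => g n (f n sn)) := by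
        intro i
        rw [dsem_stoch (unifPW n) (unifPW_isPMF n)]
        have hterm : ∀ ω : Fin (numMsg 1 n),
            dsem PCS L Q (inducedRule PS (fun sn j =>
              g n (f n (fun j' => sn ((shiftPerm' n (ω : ℕ)).symm j')))
                ((shiftPerm' n (ω : ℕ)) j)) i)
            = dsem PCS L Q (inducedRule PS (fun sn => g n (f n sn))
                (i + ⟨(ω : ℕ) % n, Nat.mod_lt _ hn⟩)) := by
          intro ω
          rw [shift_rule' (shiftPerm' n (ω : ℕ)) (fun sn => g n (f n sn))
            _ (fun sn => rfl) i]
          congr 1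
          rw [hsp]
          rfl
        have hmaxn : max n 1 = n := max_eq_left hn
        calc ∑ ω, unifPW n ω * dsem PCS L Q (inducedRule PS (fun sn j =>
              g n (f n (fun j' => sn ((shiftPerm' n (ω : ℕ)).symm j')))
                ((shiftPerm' n (ω : ℕ)) j)) i)
            = ∑ ω : Fin (numMsg 1 n), (if (ω : ℕ) < n then
                (n:ℝ)⁻¹ * dsem PCS L Q (inducedRule PS (fun sn => g n (f n sn))
                  (i + ⟨(ω : ℕ) % n, Nat.mod_lt _ hn⟩)) else 0) := by
              refine Finset.sum_congr rfl fun ω _ => ?_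
              rw [hterm ω]
              unfold unifPW
              rw [hmaxn]
              split
              · rfl
              · rw [zero_mul]
          _ = ∑ j ∈ Finset.range n, (n:ℝ)⁻¹ * dsem PCS L Q (inducedRule PS
                (fun sn => g n (f n sn)) (i + ⟨j % n, Nat.mod_lt _ hn⟩)) := by
              have hle : n ≤ numMsg 1 n := le_trans (le_max_left n 1) (le_numMsg_one n)
              exact sum_fin_indicator hle (fun j => (n:ℝ)⁻¹ * dsem PCS L Q (inducedRule PS
                (fun sn => g n (f n sn)) (i + ⟨j % n, Nat.mod_lt _ hn⟩)))
          _ = ∑ t : Fin n, (n:ℝ)⁻¹ * dsem PCS L Q (inducedRule PS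
                (fun sn => g n (f n sn)) (i + t)) := by
              rw [← Fin.sum_univ_eq_sum_range (fun j => (n:ℝ)⁻¹ * dsem PCS L Q (inducedRule PS
                (fun sn => g n (f n sn)) (i + ⟨j % n, Nat.mod_lt _ hn⟩))) n]
              refine Finset.sum_congr rfl fun t _ => ?_
              have ht : (⟨(t : ℕ) % n, Nat.mod_lt _ hn⟩ : Fin n) = t :=
                Fin.ext (Nat.mod_eq_of_lt t.isLt)
              rw [ht]
          _ = davgCode PCS PS L Q (fun sn => g n (f n sn)) := by
              rw [← Finset.mul_sum]
              rw [Fintype.sum_equiv (Equiv.addLeft i)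
                (fun t => dsem PCS L Q (inducedRule PS (fun sn => g n (f n sn)) (i + t)))
                (fun t => dsem PCS L Q (inducedRule PS (fun sn => g n (f n sn)) t))
                (fun t => rfl)]
              rw [davgCode, one_div]
      unfold dmaxCode
      rw [iSup_congr hdsem]
      haveI : Nonempty (Fin n) := ⟨⟨0, hn⟩⟩
      exact ciSup_const
  exact Filter.Tendsto.congr (fun n => (key n).symm) hl

lemma davgCode_zero {code : (Fin 0 → S) → (Fin 0 → H)} :
    davgCode PCS PS L Q code = 0 := by
  rw [davgCode]
  simp

lemma dmaxCode_le_one (hPCSnn : ∀ c s, 0 ≤ PCS c s) (hPCS1 : ∑ c, ∑ s, PCS c s = 1)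
    (hPSnn : ∀ s, 0 ≤ PS s) (hPS1 : ∑ s, PS s = 1)
    (hL : ∀ c h, L c h ∈ Set.Icc (0:ℝ) 1) (hQ : IsRule Q)
    {Ω : Type*} [Fintype Ω] (pw : Ω → ℝ) (hpw : IsPMF pw) {n : ℕ}
    (code : (Fin n → S) → Ω → (Fin n → H)) :
    dmaxCode PCS PS L Q pw code ≤ 1 := by
  rcases Nat.eq_zero_or_pos n with hn0 | hn
  · subst hn0
    rw [dmaxCode, Real.iSup_of_isEmpty]
    exact zero_le_one
  · haveI : Nonempty (Fin n) := ⟨⟨0, hn⟩⟩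
    exact ciSup_le fun i =>
      (dsem_inducedRuleStoch_mem hPCSnn hPCS1 hPSnn hPS1 hL hQ pw hpw code i).2

lemma davgCode_mem (hPCSnn : ∀ c s, 0 ≤ PCS c s) (hPCS1 : ∑ c, ∑ s, PCS c s = 1)
    (hPSnn : ∀ s, 0 ≤ PS s) (hPS1 : ∑ s, PS s = 1)
    (hL : ∀ c h, L c h ∈ Set.Icc (0:ℝ) 1) (hQ : IsRule Q) {n : ℕ}
    (code : (Fin n → S) → (Fin n → H)) :
    davgCode PCS PS L Q code ∈ Set.Icc (-1 : ℝ) 1 := by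
  rcases Nat.eq_zero_or_pos n with hn0 | hn
  · subst hn0
    rw [davgCode_zero]
    constructor <;> norm_num
  · have hsum_le : ∑ i : Fin n, dsem PCS L Q (inducedRule PS code i) ≤ (n : ℝ) := by
      calc ∑ i : Fin n, dsem PCS L Q (inducedRule PS code i) ≤ ∑ _i : Fin n, (1:ℝ) :=
          Finset.sum_le_sum fun i _ =>
            (dsem_inducedRule_mem hPCSnn hPCS1 hPSnn hPS1 hL hQ code i).2
        _ = (n : ℝ) := by simp
    have hsum_ge : -(n : ℝ) ≤ ∑ i : Fin n, dsem PCS L Q (inducedRule PS code i) := by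
      calc -(n:ℝ) = ∑ _i : Fin n, (-1 : ℝ) := by simp
        _ ≤ _ := Finset.sum_le_sum fun i _ =>
            (dsem_inducedRule_mem hPCSnn hPCS1 hPSnn hPS1 hL hQ code i).1
    have hn' : (0:ℝ) < (n:ℝ) := by exact_mod_cast hn
    rw [davgCode]
    constructor
    · rw [one_div]
      have hrw : -(1:ℝ) = (n:ℝ)⁻¹ * (-(n:ℝ)) := by field_simp
      rw [hrw]
      exact mul_le_mul_of_nonneg_left hsum_ge (inv_nonneg.mpr hn'.le)
    · rw [one_div]
      calc (n:ℝ)⁻¹ * ∑ i : Fin n, dsem PCS L Q (inducedRule PS code i)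
          ≤ (n:ℝ)⁻¹ * (n:ℝ) := mul_le_mul_of_nonneg_left hsum_le (inv_nonneg.mpr hn'.le)
        _ = 1 := inv_mul_cancel₀ hn'.ne'

/-- Derandomization: some fixed common randomness does at least as well on average. -/
lemma derand (hPCSnn : ∀ c s, 0 ≤ PCS c s) (hPCS1 : ∑ c, ∑ s, PCS c s = 1)
    (hPSnn : ∀ s, 0 ≤ PS s) (hPS1 : ∑ s, PS s = 1)
    (hL : ∀ c h, L c h ∈ Set.Icc (0:ℝ) 1) (hQ : IsRule Q)
    {Ω : Type*} [Fintype Ω] [Nonempty Ω] (pw : Ω → ℝ) (hpw : IsPMF pw) {n : ℕ}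
    (code : (Fin n → S) → Ω → (Fin n → H)) :
    ∃ ω : Ω, davgCode PCS PS L Q (fun sn => code sn ω)
      ≤ dmaxCode PCS PS L Q pw code := by
  rcases Nat.eq_zero_or_pos n with hn0 | hn
  · subst hn0
    refine ⟨Classical.arbitrary Ω, ?_⟩
    rw [davgCode_zero, dmaxCode, Real.iSup_of_isEmpty]
  · obtain ⟨ω₀, -, hmin⟩ := Finset.exists_min_image Finset.univ
      (fun ω => davgCode PCS PS L Q (fun sn => code sn ω)) ⟨Classical.arbitrary Ω, Finset.mem_univ _⟩
    refine ⟨ω₀, ?_⟩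
    have hn' : (0:ℝ) < (n:ℝ) := by exact_mod_cast hn
    haveI : Nonempty (Fin n) := ⟨⟨0, hn⟩⟩
    -- weighted average of davg's equals (1/n) ∑ᵢ dsem of stochastic rules
    have havg : ∑ ω, pw ω * davgCode PCS PS L Q (fun sn => code sn ω)
        = (1 / (n:ℝ)) * ∑ i : Fin n, dsem PCS L Q (inducedRuleStoch PS pw code i) := by
      calc ∑ ω, pw ω * davgCode PCS PS L Q (fun sn => code sn ω)
          = ∑ ω, (1/(n:ℝ)) * ∑ i : Fin n,
              pw ω * dsem PCS L Q (inducedRule PS (fun sn => code sn ω) i) := by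
            refine Finset.sum_congr rfl fun ω _ => ?_
            rw [davgCode, mul_left_comm]
            congr 1
            rw [Finset.mul_sum]
        _ = (1/(n:ℝ)) * ∑ ω, ∑ i : Fin n,
              pw ω * dsem PCS L Q (inducedRule PS (fun sn => code sn ω) i) := by
            rw [Finset.mul_sum]
        _ = (1/(n:ℝ)) * ∑ i : Fin n, ∑ ω,
              pw ω * dsem PCS L Q (inducedRule PS (fun sn => code sn ω) i) := by
            rw [Finset.sum_comm]
        _ = (1 / (n:ℝ)) * ∑ i : Fin n, dsem PCS L Q (inducedRuleStoch PS pw code i) := by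
            congr 1
            exact Finset.sum_congr rfl fun i _ => (dsem_stoch pw hpw code i).symm
    have h1 : davgCode PCS PS L Q (fun sn => code sn ω₀)
        ≤ ∑ ω, pw ω * davgCode PCS PS L Q (fun sn => code sn ω) := by
      calc davgCode PCS PS L Q (fun sn => code sn ω₀)
          = ∑ ω, pw ω * davgCode PCS PS L Q (fun sn => code sn ω₀) := by
            rw [← Finset.sum_mul, hpw.2, one_mul]
        _ ≤ _ := Finset.sum_le_sum fun ω _ =>
            mul_le_mul_of_nonneg_left (hmin ω (Finset.mem_univ ω)) (hpw.1 ω)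
    have h2 : (1 / (n:ℝ)) * ∑ i : Fin n, dsem PCS L Q (inducedRuleStoch PS pw code i)
        ≤ dmaxCode PCS PS L Q pw code := by
      have hbdd : BddAbove (Set.range fun i : Fin n =>
          dsem PCS L Q (inducedRuleStoch PS pw code i)) :=
        Set.Finite.bddAbove (Set.finite_range _)
      have hle : ∀ i : Fin n, dsem PCS L Q (inducedRuleStoch PS pw code i)
          ≤ dmaxCode PCS PS L Q pw code := fun i => le_ciSup hbdd i
      calc (1 / (n:ℝ)) * ∑ i : Fin n, dsem PCS L Q (inducedRuleStoch PS pw code i)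
          ≤ (1 / (n:ℝ)) * ∑ _i : Fin n, dmaxCode PCS PS L Q pw code := by
            apply mul_le_mul_of_nonneg_left (Finset.sum_le_sum fun i _ => hle i)
            positivity
        _ = dmaxCode PCS PS L Q pw code := by
            rw [Finset.sum_const, Finset.card_univ, Fintype.card_fin, nsmul_eq_mul]
            field_simp
    exact le_trans h1 (havg ▸ h2)

/-- the induced rule of a constant tail coordinate -/
def tailRule (PS : S → ℝ) (h₀ : H) : S → H → ℝ :=
  fun s h => (if h₀ = h then PS s else 0) / PS s

/-- tiled code: repeat a blocklength-`m` code `b` times, pad with `h₀`. -/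
def tileCode (h₀ : H) {m n : ℕ} (b : ℕ) (hm : 0 < m) (hbm : b * m ≤ n)
    (D : (Fin m → S) → (Fin m → H)) : (Fin n → S) → (Fin n → H) :=
  fun sn i =>
    if hi : (i : ℕ) < b * m then
      D (fun r => sn ⟨(i : ℕ) / m * m + (r : ℕ), by
        have hj : (i:ℕ)/m < b := (Nat.div_lt_iff_lt_mul hm).mpr hi
        calc (i : ℕ) / m * m + (r : ℕ) < (i : ℕ) / m * m + m := by
              exact Nat.add_lt_add_left r.isLt _
          _ = ((i : ℕ) / m + 1) * m := by ring
          _ ≤ b * m := Nat.mul_le_mul_right m hj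
          _ ≤ n := hbm⟩)
        ⟨(i : ℕ) % m, Nat.mod_lt _ hm⟩
    else h₀

lemma tile_rule_block (hPS1 : ∑ s, PS s = 1) (h₀ : H) {m n : ℕ} (b : ℕ)
    (hm : 0 < m) (hbm : b * m ≤ n) (D : (Fin m → S) → (Fin m → H))
    (i : Fin n) (hi : (i : ℕ) < b * m) :
    inducedRule PS (tileCode h₀ b hm hbm D) i
      = inducedRule PS D ⟨(i : ℕ) % m, Nat.mod_lt _ hm⟩ := by
  classical
  set T : Fin m → Fin n := fun r => ⟨(i : ℕ) / m * m + (r : ℕ), by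
    have hj : (i:ℕ)/m < b := (Nat.div_lt_iff_lt_mul hm).mpr hi
    calc (i : ℕ) / m * m + (r : ℕ) < (i : ℕ) / m * m + m := Nat.add_lt_add_left r.isLt _
      _ = ((i : ℕ) / m + 1) * m := by ring
      _ ≤ b * m := Nat.mul_le_mul_right m hj
      _ ≤ n := hbm⟩ with hT
  have hTinj : Function.Injective T := by
    intro r1 r2 h12
    have := congrArg (fun x : Fin n => (x : ℕ)) h12
    simp only [hT] at this
    exact Fin.ext (Nat.add_left_cancel this)
  have hTr0 : T ⟨(i : ℕ) % m, Nat.mod_lt _ hm⟩ = i := by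
    apply Fin.ext
    simp only [hT]
    exact Nat.div_add_mod' (i : ℕ) m
  have hcode : ∀ sn, tileCode h₀ b hm hbm D sn (T ⟨(i : ℕ) % m, Nat.mod_lt _ hm⟩)
      = D (fun r' => sn (T r')) ⟨(i : ℕ) % m, Nat.mod_lt _ hm⟩ := by
    intro sn
    rw [hTr0]
    unfold tileCode
    rw [dif_pos hi]
  have hmain := inducedRule_subcode hPS1 T hTinj _ D _ hcode
  rw [hTr0] at hmain
  exact hmain

lemma tile_rule_tail (hPS1 : ∑ s, PS s = 1) (h₀ : H) {m n : ℕ} (b : ℕ)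
    (hm : 0 < m) (hbm : b * m ≤ n) (D : (Fin m → S) → (Fin m → H))
    (i : Fin n) (hi : ¬ (i : ℕ) < b * m) :
    inducedRule PS (tileCode h₀ b hm hbm D) i = tailRule PS h₀ := by
  classical
  funext s h
  unfold inducedRule tailRule
  congr 1
  have hc : ∀ sn : Fin n → S, tileCode h₀ b hm hbm D sn i = h₀ := fun sn => dif_neg hi
  calc ∑ sn : Fin n → S, (if sn i = s ∧ tileCode h₀ b hm hbm D sn i = h then ∏ j, PS (sn j) else 0)
      = ∑ sn : Fin n → S, (if h₀ = h then (if sn i = s then ∏ j, PS (sn j) else 0) else 0) := by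
        refine Finset.sum_congr rfl fun sn _ => ?_
        rw [hc sn]
        by_cases hh : h₀ = h <;> by_cases hs : sn i = s <;> simp [hh, hs]
    _ = (if h₀ = h then PS s else 0) := by
        by_cases hh : h₀ = h
        · rw [if_pos hh]
          rw [← marg hPS1 i s]
          exact Finset.sum_congr rfl fun sn _ => if_pos hh
        · rw [if_neg hh]
          rw [Finset.sum_eq_zero fun sn _ => if_neg hh]

/-- sum of a `mod m`-periodic function over `range (b*m)` -/
lemma sum_range_periodic (G : ℕ → ℝ) (m : ℕ) (hG : ∀ x, G x = G (x % m)) :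
    ∀ b : ℕ, ∑ x ∈ Finset.range (b * m), G x = b * ∑ r ∈ Finset.range m, G r := by
  intro b
  induction b with
  | zero => simp
  | succ b ih =>
    have hsplit : ∑ x ∈ Finset.range (b * m + m), G x
        = ∑ x ∈ Finset.range (b * m), G x + ∑ x ∈ Finset.range m, G (b * m + x) := by
      rw [Finset.sum_range_add]
    have hbm : (b + 1) * m = b * m + m := by ring
    rw [hbm, hsplit, ih]
    have : ∑ x ∈ Finset.range m, G (b * m + x) = ∑ x ∈ Finset.range m, G x := by
      refine Finset.sum_congr rfl fun x hx => ?_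
      rw [hG (b * m + x)]
      have hmod : (b * m + x) % m = x % m := by
        rw [Nat.add_comm, Nat.add_mul_mod_self_right]
      rw [hmod, ← hG x]
    rw [this]
    push_cast
    ring

/-- average distortion of the tiled code -/
lemma tile_davg (hPS1 : ∑ s, PS s = 1) (h₀ : H) {m n : ℕ} (b : ℕ)
    (hm : 0 < m) (hn : 0 < n) (hbm : b * m ≤ n) (D : (Fin m → S) → (Fin m → H)) :
    davgCode PCS PS L Q (tileCode h₀ b hm hbm D)
      = (1 / (n:ℝ)) * ((b : ℝ) * ((m : ℝ) * davgCode PCS PS L Q D)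
          + ((n : ℝ) - (b : ℝ) * (m : ℝ)) * dsem PCS L Q (tailRule PS h₀)) := by
  classical
  set G : ℕ → ℝ := fun x => dsem PCS L Q (inducedRule PS D ⟨x % m, Nat.mod_lt _ hm⟩) with hGdef
  have hGper : ∀ x, G x = G (x % m) := by
    intro x
    simp only [hGdef]
    exact congrArg (fun t => dsem PCS L Q (inducedRule PS D t))
      (Fin.ext (Nat.mod_mod_of_dvd x dvd_rfl).symm)
  set d₀ : ℝ := dsem PCS L Q (tailRule PS h₀) with hd0
  have hcoord : ∀ i : Fin n, dsem PCS L Q (inducedRule PS (tileCode h₀ b hm hbm D) i)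
      = if (i : ℕ) < b * m then G (i : ℕ) else d₀ := by
    intro i
    by_cases hi : (i : ℕ) < b * m
    · rw [if_pos hi, tile_rule_block hPS1 h₀ b hm hbm D i hi]
    · rw [if_neg hi, tile_rule_tail hPS1 h₀ b hm hbm D i hi]
  have hsum : ∑ i : Fin n, dsem PCS L Q (inducedRule PS (tileCode h₀ b hm hbm D) i)
      = (b : ℝ) * ∑ r ∈ Finset.range m, G r + ((n : ℕ) - (b * m : ℕ) : ℕ) * d₀ := by
    calc ∑ i : Fin n, dsem PCS L Q (inducedRule PS (tileCode h₀ b hm hbm D) i)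
        = ∑ i : Fin n, (if (i : ℕ) < b * m then G (i : ℕ) else d₀) :=
          Finset.sum_congr rfl fun i _ => hcoord i
      _ = ∑ x ∈ Finset.range n, (if x < b * m then G x else d₀) :=
          Fin.sum_univ_eq_sum_range (fun x => if x < b * m then G x else d₀) n
      _ = ∑ x ∈ Finset.range (b * m), (if x < b * m then G x else d₀)
          + ∑ x ∈ Finset.range (n - b * m), (if b * m + x < b * m then G (b * m + x) else d₀) := by
          rw [← Finset.sum_range_add, Nat.add_sub_cancel' hbm]
      _ = ∑ x ∈ Finset.range (b * m), G x + ∑ _x ∈ Finset.range (n - b * m), d₀ := by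
          congr 1
          · exact Finset.sum_congr rfl fun x hx => if_pos (Finset.mem_range.mp hx)
          · exact Finset.sum_congr rfl fun x hx => if_neg (by omega)
      _ = (b : ℝ) * ∑ r ∈ Finset.range m, G r + ((n : ℕ) - (b * m : ℕ) : ℕ) * d₀ := by
          rw [sum_range_periodic G m hGper b, Finset.sum_const, nsmul_eq_mul, Finset.card_range]
  have hGsum : ∑ r ∈ Finset.range m, G r = (m : ℝ) * davgCode PCS PS L Q D := by
    have : ∑ r ∈ Finset.range m, G r = ∑ r : Fin m, dsem PCS L Q (inducedRule PS D r) := by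
      rw [← Fin.sum_univ_eq_sum_range (fun x => G x) m]
      refine Finset.sum_congr rfl fun r _ => ?_
      simp only [hGdef]
      exact congrArg (fun t => dsem PCS L Q (inducedRule PS D t))
        (Fin.ext (Nat.mod_eq_of_lt r.isLt))
    rw [this, davgCode]
    have hm' : (0:ℝ) < (m:ℝ) := by exact_mod_cast hm
    field_simp
  rw [davgCode, hsum, hGsum]
  have hcast : (((n : ℕ) - (b * m : ℕ) : ℕ) : ℝ) = (n : ℝ) - (b : ℝ) * (m : ℝ) := by
    rw [Nat.cast_sub hbm]
    push_cast
    ring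
  rw [hcast]

lemma numMsg_le_of_nonpos {R : ℝ} (hR : R ≤ 0) (m : ℕ) : numMsg R m = 1 := by
  unfold numMsg
  have h1 : (2:ℝ) ^ ((m:ℝ) * R) ≤ 1 :=
    Real.rpow_le_one_of_one_le_of_nonpos one_le_two
      (mul_nonpos_of_nonneg_of_nonpos (Nat.cast_nonneg m) hR)
  have h2 : ⌈(2:ℝ) ^ ((m:ℝ) * R)⌉₊ ≤ 1 := by
    rw [Nat.ceil_le]
    exact_mod_cast h1
  exact le_antisymm h2 (numMsg_pos R m)

lemma numMsg_tile_le {R δ : ℝ} (hδ : 0 < δ) {m b n : ℕ}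
    (hmδ : 1/δ ≤ (m:ℝ)) (hbm : b * m ≤ n) :
    (numMsg R m) ^ b ≤ numMsg (R + δ) n := by
  rcases le_or_gt R 0 with hR | hR
  · rw [numMsg_le_of_nonpos hR, one_pow]
    exact numMsg_pos _ _
  · -- real-valued bound
    have hm2 : (1:ℝ) ≤ (2:ℝ) ^ ((m:ℝ) * R) :=
      Real.one_le_rpow one_le_two (by positivity)
    have hceil : ((numMsg R m : ℕ) : ℝ) ≤ (2:ℝ) ^ ((m:ℝ) * R) + 1 := by
      unfold numMsg
      exact (Nat.ceil_lt_add_one (by positivity)).le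
    have hstep : ((numMsg R m : ℕ) : ℝ) ≤ (2:ℝ) ^ ((m:ℝ) * R + 1) := by
      calc ((numMsg R m : ℕ) : ℝ) ≤ (2:ℝ) ^ ((m:ℝ) * R) + 1 := hceil
        _ ≤ (2:ℝ) ^ ((m:ℝ) * R) + (2:ℝ) ^ ((m:ℝ) * R) := by linarith
        _ = (2:ℝ) ^ ((m:ℝ) * R) * 2 := by ring
        _ = (2:ℝ) ^ ((m:ℝ) * R + 1) := by
            rw [Real.rpow_add_one (by norm_num : (2:ℝ) ≠ 0)]
    have hpow : (((numMsg R m) ^ b : ℕ) : ℝ) ≤ (2:ℝ) ^ (((m:ℝ) * R + 1) * (b:ℝ)) := by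
      push_cast
      calc ((numMsg R m : ℕ) : ℝ) ^ b ≤ ((2:ℝ) ^ ((m:ℝ) * R + 1)) ^ b :=
          pow_le_pow_left₀ (Nat.cast_nonneg _) hstep b
        _ = (2:ℝ) ^ (((m:ℝ) * R + 1) * (b:ℝ)) := by
            rw [← Real.rpow_natCast ((2:ℝ) ^ ((m:ℝ) * R + 1)) b, ← Real.rpow_mul (by norm_num)]
    have hexp : ((m:ℝ) * R + 1) * (b:ℝ) ≤ (n:ℝ) * (R + δ) := by
      have hbmn : (b:ℝ) * (m:ℝ) ≤ (n:ℝ) := by exact_mod_cast hbm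
      have hb : (b:ℝ) ≤ (n:ℝ) * δ := by
        have hmδ' : 1 ≤ (m:ℝ) * δ := by
          rw [div_le_iff₀ hδ] at hmδ
          linarith
        nlinarith [Nat.cast_nonneg (α := ℝ) b, Nat.cast_nonneg (α := ℝ) n]
      nlinarith [Nat.cast_nonneg (α := ℝ) b, Nat.cast_nonneg (α := ℝ) m]
    have hfinal : (((numMsg R m) ^ b : ℕ) : ℝ) ≤ (2:ℝ) ^ ((n:ℝ) * (R + δ)) :=
      le_trans hpow (Real.rpow_le_rpow_of_exponent_le one_le_two hexp)
    unfold numMsg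
    exact_mod_cast le_trans hfinal (Nat.le_ceil _)

/-- wrap a tiled code into encoder/decoder form at rate `R'`. -/
lemma tile_wrap (h₀ : H) {R R' : ℝ} {m b n : ℕ} (hm : 0 < m) (hbm : b * m ≤ n)
    (hcard : (numMsg R m) ^ b ≤ numMsg R' n)
    (enc : (Fin m → S) → Fin (numMsg R m)) (dec : Fin (numMsg R m) → (Fin m → H)) :
    ∃ (F : (Fin n → S) → Fin (numMsg R' n)) (G : Fin (numMsg R' n) → (Fin n → H)),
      (fun sn => G (F sn)) = tileCode h₀ b hm hbm (fun u => dec (enc u)) := by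
  classical
  have hcard' : Fintype.card (Fin b → Fin (numMsg R m)) ≤ Fintype.card (Fin (numMsg R' n)) := by
    simpa [Fintype.card_fun] using hcard
  obtain ⟨emb⟩ := Function.Embedding.nonempty_of_card_le hcard'
  have hpf : ∀ (j : Fin b) (r : Fin m), (j : ℕ) * m + (r : ℕ) < n := by
    intro j r
    calc (j : ℕ) * m + (r : ℕ) < (j : ℕ) * m + m := Nat.add_lt_add_left r.isLt _
      _ = ((j : ℕ) + 1) * m := by ring
      _ ≤ b * m := Nat.mul_le_mul_right m j.isLt
      _ ≤ n := hbm
  set v₀ : (Fin n → S) → (Fin b → Fin (numMsg R m)) :=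
    fun sn j => enc (fun r => sn ⟨(j : ℕ) * m + (r : ℕ), hpf j r⟩) with hv₀
  refine ⟨fun sn => emb (v₀ sn),
    fun msg => if hv : ∃ v, emb v = msg then
      (fun i => if hi : (i : ℕ) < b * m then
        dec (hv.choose ⟨(i : ℕ) / m, (Nat.div_lt_iff_lt_mul hm).mpr hi⟩)
          ⟨(i : ℕ) % m, Nat.mod_lt _ hm⟩
      else h₀)
    else fun _ => h₀, ?_⟩
  funext sn
  have hv : ∃ v, emb v = emb (v₀ sn) := ⟨v₀ sn, rfl⟩
  beta_reduce
  rw [dif_pos hv]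
  have hch : hv.choose = v₀ sn := emb.injective hv.choose_spec
  funext i
  by_cases hi : (i : ℕ) < b * m
  · rw [dif_pos hi]
    unfold tileCode
    rw [dif_pos hi, hch]
  · rw [dif_neg hi]
    unfold tileCode
    rw [dif_neg hi]

/-- Max → Avg achievability, at the cost of an arbitrarily small rate increase. -/
lemma max_to_avg [Nonempty H] (hPCSnn : ∀ c s, 0 ≤ PCS c s)
    (hPCS1 : ∑ c, ∑ s, PCS c s = 1)
    (hPSnn : ∀ s, 0 ≤ PS s) (hPS1 : ∑ s, PS s = 1)
    (hL : ∀ c h, L c h ∈ Set.Icc (0:ℝ) 1) (hQ : IsRule Q)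
    {R ε δ : ℝ} (hδ : 0 < δ)
    (hach : AchMax PCS PS L Q R ε) : AchAvg PCS PS L Q (R + δ) ε := by
  classical
  obtain ⟨R₀, hR₀, f, g, pw, hpw, l, hl, hlε⟩ := hach
  haveI hΩne : ∀ n, Nonempty (Fin (numMsg R₀ n)) := fun n => ⟨⟨0, numMsg_pos _ _⟩⟩
  set h₀ : H := Classical.arbitrary H with hh₀
  set d₀ : ℝ := dsem PCS L Q (tailRule PS h₀) with hd₀
  -- derandomize each blocklength
  have hder : ∀ n, ∃ ω, davgCode PCS PS L Q (fun sn => g n (f n sn ω) ω)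
      ≤ dmaxCode PCS PS L Q (pw n) (fun sn ω => g n (f n sn ω) ω) := fun n =>
    derand hPCSnn hPCS1 hPSnn hPS1 hL hQ (pw n) (hpw n) _
  set ωs : ∀ n, Fin (numMsg R₀ n) := fun n => (hder n).choose with hωs
  set a : ℕ → ℝ := fun m =>
    davgCode PCS PS L Q (fun u => g m (f m u (ωs m)) (ωs m)) with ha
  have ha_le : ∀ n, a n ≤ dmaxCode PCS PS L Q (pw n) (fun sn ω => g n (f n sn ω) ω) :=
    fun n => (hder n).choose_spec
  have ha_mem : ∀ n, a n ∈ Set.Icc (-1:ℝ) 1 := fun n =>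
    davgCode_mem hPCSnn hPCS1 hPSnn hPS1 hL hQ _
  obtain ⟨l', hl'mem, φ, hφ, hconv⟩ :=
    tendsto_subseq_of_bounded (Metric.isBounded_Icc (-1:ℝ) 1) ha_mem
  have hdl : Tendsto (fun k => dmaxCode PCS PS L Q (pw (φ k))
      (fun sn ω => g (φ k) (f (φ k) sn ω) ω)) atTop (𝓝 l) := hl.comp hφ.tendsto_atTop
  have hl'l : l' ≤ l := le_of_tendsto_of_tendsto' hconv hdl (fun k => ha_le (φ k))
  -- the subsequence index selection
  set k₀ : ℕ := max 1 ⌈1/δ⌉₊ with hk₀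
  have hk₀1 : 1 ≤ k₀ := le_max_left _ _
  have hφδ : ∀ k, k₀ ≤ k → 1/δ ≤ (φ k : ℝ) := by
    intro k hk
    have h1 : ⌈1/δ⌉₊ ≤ k := le_trans (le_max_right _ _) hk
    have h2 : k ≤ φ k := hφ.le_apply
    calc (1/δ : ℝ) ≤ (⌈1/δ⌉₊ : ℝ) := Nat.le_ceil _
      _ ≤ (φ k : ℝ) := by exact_mod_cast le_trans h1 h2
  have hφ1 : ∀ k, k₀ ≤ k → 1 ≤ φ k := fun k hk =>
    le_trans (le_trans hk₀1 hk) hφ.le_apply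
  set J : ℕ → Finset ℕ := fun n =>
    (Finset.range (n+1)).filter (fun k => k₀ ≤ k ∧ φ k * φ k ≤ n) with hJ
  set kk : ℕ → ℕ := fun n => if h : (J n).Nonempty then (J n).max' h else 0 with hkk
  set mm : ℕ → ℕ := fun n => φ (kk n) with hmm
  set bb : ℕ → ℕ := fun n => n / mm n with hbb
  have hkk_mem : ∀ n, (J n).Nonempty → kk n ∈ J n := by
    intro n h
    simp only [hkk, dif_pos h]
    exact Finset.max'_mem _ h
  have hkk_facts : ∀ n, (J n).Nonempty → k₀ ≤ kk n ∧ mm n * mm n ≤ n := by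
    intro n h
    have := hkk_mem n h
    simp only [hJ, Finset.mem_filter] at this
    exact ⟨this.2.1, this.2.2⟩
  have hmm_pos : ∀ n, (J n).Nonempty → 0 < mm n := by
    intro n h
    exact lt_of_lt_of_le Nat.zero_lt_one (hφ1 _ (hkk_facts n h).1)
  have hmmδ : ∀ n, (J n).Nonempty → 1/δ ≤ (mm n : ℝ) := by
    intro n h
    exact hφδ _ (hkk_facts n h).1
  have hn_pos : ∀ n, (J n).Nonempty → 0 < n := by
    intro n h
    have h1 := hmm_pos n h
    have h2 := (hkk_facts n h).2
    nlinarith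
  have hbm : ∀ n, bb n * mm n ≤ n := fun n => Nat.div_mul_le_self n (mm n)
  -- eventually all n are good
  have hgood : ∀ᶠ n in atTop, (J n).Nonempty := by
    rw [eventually_atTop]
    refine ⟨φ k₀ * φ k₀, fun n hn => ?_⟩
    refine ⟨k₀, ?_⟩
    simp only [hJ, Finset.mem_filter, Finset.mem_range]
    have h1 : 1 ≤ φ k₀ := hφ1 k₀ (le_refl _)
    have h2 : k₀ ≤ φ k₀ := hφ.le_apply
    refine ⟨by nlinarith, le_refl _, hn⟩
  -- kk → ∞ along good n
  have hkk_t : Tendsto kk atTop atTop := by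
    rw [tendsto_atTop]
    intro K
    rw [eventually_atTop]
    refine ⟨φ (max K k₀) * φ (max K k₀), fun n hn => ?_⟩
    have hk1 : max K k₀ ∈ J n := by
      simp only [hJ, Finset.mem_filter, Finset.mem_range]
      have h1 : 1 ≤ φ (max K k₀) := hφ1 _ (le_max_right _ _)
      have h2 : max K k₀ ≤ φ (max K k₀) := hφ.le_apply
      refine ⟨by nlinarith, le_max_right _ _, hn⟩
    have hne : (J n).Nonempty := ⟨_, hk1⟩
    have : max K k₀ ≤ kk n := by
      simp only [hkk, dif_pos hne]
      exact Finset.le_max' _ _ hk1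
    exact le_trans (le_max_left _ _) this
  have hmm_t : Tendsto mm atTop atTop := by
    apply tendsto_atTop_mono (fun n => ?_) hkk_t
    exact hφ.le_apply
  -- the codes
  have hex : ∀ n, ∃ (F : (Fin n → S) → Fin (numMsg (R+δ) n))
      (G : Fin (numMsg (R+δ) n) → (Fin n → H)),
      ∀ (h : (J n).Nonempty), (fun sn => G (F sn))
        = tileCode h₀ (bb n) (hmm_pos n h) (hbm n)
            (fun u => g (mm n) (f (mm n) u (ωs (mm n))) (ωs (mm n))) := by
    intro n
    by_cases h : (J n).Nonempty
    · have hcard : (numMsg R (mm n)) ^ (bb n) ≤ numMsg (R + δ) n :=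
        numMsg_tile_le hδ (hmmδ n h) (hbm n)
      obtain ⟨F, G, hFG⟩ := tile_wrap h₀ (hmm_pos n h) (hbm n) hcard
        (fun u => f (mm n) u (ωs (mm n))) (fun msg => g (mm n) msg (ωs (mm n)))
      exact ⟨F, G, fun _ => hFG⟩
    · exact ⟨fun _ => ⟨0, numMsg_pos _ _⟩, fun _ _ => h₀, fun h' => absurd h' h⟩
  set F : ∀ n, (Fin n → S) → Fin (numMsg (R+δ) n) := fun n => (hex n).choose with hF
  set G : ∀ n, Fin (numMsg (R+δ) n) → (Fin n → H) :=
    fun n => (hex n).choose_spec.choose with hG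
  have hFG : ∀ n (h : (J n).Nonempty), (fun sn => G n (F n sn))
      = tileCode h₀ (bb n) (hmm_pos n h) (hbm n)
          (fun u => g (mm n) (f (mm n) u (ωs (mm n))) (ωs (mm n))) :=
    fun n => (hex n).choose_spec.choose_spec
  -- value of the average distortion for good n
  set θ : ℕ → ℝ := fun n => ((bb n : ℝ) * (mm n : ℝ)) / (n : ℝ) with hθ
  have hdavg_eq : ∀ n, (J n).Nonempty →
      davgCode PCS PS L Q (fun sn => G n (F n sn))
        = θ n * a (mm n) + (1 - θ n) * d₀ := by
    intro n h
    rw [hFG n h]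
    rw [tile_davg hPS1 h₀ (bb n) (hmm_pos n h) (hn_pos n h) (hbm n)
      (fun u => g (mm n) (f (mm n) u (ωs (mm n))) (ωs (mm n)))]
    have hn' : ((n:ℕ):ℝ) ≠ 0 := by
      have := hn_pos n h
      positivity
    simp only [hθ, ha, hd₀]
    field_simp
  -- limit of θ
  have hθ_le_one : ∀ n, 0 < n → θ n ≤ 1 := by
    intro n hn
    have h1 : (bb n : ℝ) * (mm n : ℝ) ≤ (n : ℝ) := by exact_mod_cast hbm n
    have h2 : (0:ℝ) < (n:ℝ) := by exact_mod_cast hn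
    rw [hθ, div_le_one h2]
    exact h1
  have hθ_ge : ∀ n, (J n).Nonempty → 1 - ((mm n : ℝ))⁻¹ ≤ θ n := by
    intro n h
    have hmp := hmm_pos n h
    have hnp := hn_pos n h
    have hmsq := (hkk_facts n h).2
    have hlt : n < bb n * mm n + mm n := by
      have hdm := Nat.div_add_mod n (mm n)
      have hmod : n % mm n < mm n := Nat.mod_lt _ hmp
      have hc : bb n * mm n = mm n * (n / mm n) := by
        simp only [hbb]
        exact Nat.mul_comm _ _
      omega
    have hmr : (0:ℝ) < (mm n : ℝ) := by exact_mod_cast hmp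
    have hnr : (0:ℝ) < (n : ℝ) := by exact_mod_cast hnp
    have hltr : (n : ℝ) - (mm n : ℝ) ≤ (bb n : ℝ) * (mm n : ℝ) := by
      have : (n : ℝ) < (bb n : ℝ) * (mm n : ℝ) + (mm n : ℝ) := by exact_mod_cast hlt
      linarith
    have hmsqr : (mm n : ℝ) * (mm n : ℝ) ≤ (n : ℝ) := by exact_mod_cast hmsq
    simp only [hθ]
    rw [le_div_iff₀ hnr]
    have hmu : (mm n : ℝ) * ((mm n : ℝ))⁻¹ = 1 := mul_inv_cancel₀ hmr.ne'
    have hiv : (0:ℝ) ≤ ((mm n : ℝ))⁻¹ := inv_nonneg.mpr hmr.le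
    have hkey : (mm n : ℝ) ≤ ((mm n : ℝ))⁻¹ * (n : ℝ) := by
      have := mul_le_mul_of_nonneg_left hmsqr hiv
      calc (mm n : ℝ) = ((mm n:ℝ))⁻¹ * ((mm n:ℝ) * (mm n:ℝ)) := by
            field_simp
        _ ≤ ((mm n : ℝ))⁻¹ * (n : ℝ) := this
    nlinarith
  have hmm_cast : Tendsto (fun n => ((mm n : ℕ) : ℝ)) atTop atTop :=
    tendsto_natCast_atTop_atTop.comp hmm_t
  have hinv0 : Tendsto (fun n => ((mm n : ℝ))⁻¹) atTop (𝓝 0) :=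
    hmm_cast.inv_tendsto_atTop
  have hlow : Tendsto (fun n => 1 - ((mm n : ℝ))⁻¹) atTop (𝓝 1) := by
    have h1 := (tendsto_const_nhds : Tendsto (fun _ : ℕ => (1:ℝ)) atTop (𝓝 1)).sub hinv0
    simpa using h1
  have hθ_t : Tendsto θ atTop (𝓝 1) := by
    apply tendsto_of_tendsto_of_tendsto_of_le_of_le' hlow tendsto_const_nhds
    · filter_upwards [hgood] with n h
      exact hθ_ge n h
    · filter_upwards [hgood] with n h
      exact hθ_le_one n (hn_pos n h)
  have ha' : Tendsto (fun n => a (mm n)) atTop (𝓝 l') := hconv.comp hkk_t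
  have htarget : Tendsto (fun n => θ n * a (mm n) + (1 - θ n) * d₀) atTop (𝓝 l') := by
    have h1 : Tendsto (fun n => θ n * a (mm n) + (1 - θ n) * d₀) atTop
        (𝓝 (1 * l' + (1 - 1) * d₀)) :=
      (hθ_t.mul ha').add (((tendsto_const_nhds :
        Tendsto (fun _ : ℕ => (1:ℝ)) atTop (𝓝 1)).sub hθ_t).mul tendsto_const_nhds)
    have : 1 * l' + (1 - 1) * d₀ = l' := by ring
    rwa [this] at h1
  have hseq : Tendsto (fun n => davgCode PCS PS L Q (fun sn => G n (F n sn)))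
      atTop (𝓝 l') := by
    apply htarget.congr'
    filter_upwards [hgood] with n h
    exact (hdavg_eq n h).symm
  exact ⟨F, G, l', hseq, lt_of_le_of_lt hl'l hlε⟩

end Main

/-- **Achievability for `d_max`** (Lemma 1): with sufficient common randomness,
the rate–distortion region for `d_max` coincides with the one for `d_avg`. -/
theorem dmax_region_eq_davg_region
    {C S H : Type*} [Fintype C] [Fintype S] [Fintype H]
    [Nonempty C] [Nonempty S] [Nonempty H]
    (PC : C → ℝ) (hPC : IsPMF PC)
    (PSC : C → S → ℝ) (hPSC : ∀ c, IsPMF (PSC c))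
    (PCS : C → S → ℝ) (hPCS : PCS = fun c s => PC c * PSC c s)
    (PS : S → ℝ) (hPS : PS = fun s => ∑ c, PCS c s)
    (L : C → H → ℝ) (hL : ∀ c h, L c h ∈ Set.Icc (0 : ℝ) 1)
    (Q : S → H → ℝ) (hQ : IsRule Q) (R ε : ℝ) :
    (R, ε) ∈ closure {p : ℝ × ℝ | AchMax PCS PS L Q p.1 p.2} ↔
      (R, ε) ∈ closure {p : ℝ × ℝ | AchAvg PCS PS L Q p.1 p.2} := by
  have hPCSnn : ∀ c s, 0 ≤ PCS c s := by
    intro c s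
    rw [hPCS]
    exact mul_nonneg (hPC.1 c) ((hPSC c).1 s)
  have hPCS1 : ∑ c, ∑ s, PCS c s = 1 := by
    rw [hPCS]
    calc ∑ c, ∑ s, PC c * PSC c s = ∑ c, PC c * ∑ s, PSC c s := by
          exact Finset.sum_congr rfl fun c _ => (Finset.mul_sum _ _ _).symm
      _ = ∑ c, PC c := Finset.sum_congr rfl fun c _ => by rw [(hPSC c).2, mul_one]
      _ = 1 := hPC.2
  have hPSnn : ∀ s, 0 ≤ PS s := by
    intro s
    rw [hPS]
    exact Finset.sum_nonneg fun c _ => hPCSnn c s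
  have hPS1 : ∑ s, PS s = 1 := by
    simp only [hPS]
    rw [Finset.sum_comm]
    exact hPCS1
  constructor
  · intro hmem
    have hsub : {p : ℝ × ℝ | AchMax PCS PS L Q p.1 p.2}
        ⊆ closure {p : ℝ × ℝ | AchAvg PCS PS L Q p.1 p.2} := by
      rintro ⟨R', ε'⟩ hach
      have htendsto : Tendsto (fun j : ℕ => ((R' + 1 / ((j:ℝ) + 1), ε') : ℝ × ℝ))
          atTop (𝓝 (R', ε')) := by
        have h1 : Tendsto (fun j : ℕ => R' + 1 / ((j:ℝ) + 1)) atTop (𝓝 R') := by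
          have := (tendsto_const_nhds :
            Tendsto (fun _ : ℕ => R') atTop (𝓝 R')).add
              tendsto_one_div_add_atTop_nhds_zero_nat
          simpa using this
        exact h1.prodMk_nhds tendsto_const_nhds
      refine mem_closure_of_tendsto htendsto ?_
      filter_upwards with j
      have hδ : (0:ℝ) < 1 / ((j:ℝ) + 1) := by positivity
      exact max_to_avg hPCSnn hPCS1 hPSnn hPS1 hL hQ hδ hach
    exact closure_minimal hsub isClosed_closure hmem
  · intro hmem
    have hsub : {p : ℝ × ℝ | AchAvg PCS PS L Q p.1 p.2}
        ⊆ {p : ℝ × ℝ | AchMax PCS PS L Q p.1 p.2} := by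
      rintro ⟨R', ε'⟩ hach
      exact avg_to_max hach
    exact closure_mono hsub hmem
end
end

section
/- Distortion-rate bound for scheme 1 (Lemma 2, Eq. (9)): Assume the loss satisfies 0 ≤ L_c(h) ≤ L_max for all c∈𝒞, h∈ℋ. Let P_H be a full-support pmf on ℋ, let 𝒬 be a convex set of learning rules containing Q, and let Q̂ ∈ 𝒬 minimize the expected divergence 𝓡(Q') = E_{C,S}[D_KL(Q'(·|S) ‖ P_H)] over 𝒬 (divergences in nats). Set Δ_R = 𝓡(Q) − 𝓡(Q̂) ≥ 0. Then the semantic distortion satisfies d_sem(Q, Q̂) ≤ L_max · min{ √(Δ_R/2), √(1 − e^{−Δ_R}) }. -/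
open Finset Filter Topology Classical

noncomputable section

/-- Kullback–Leibler divergence in nats between pmfs on a finite type
(with the convention `0 · ln 0 = 0`). -/
def klNats {α : Type*} [Fintype α] (q p : α → ℝ) : ℝ :=
  ∑ x, q x * Real.log (q x / p x)

/-- Expected divergence `𝓡(Q') = E_{C,S}[D_KL(Q'(·|S) ‖ P_H)]` of a learning
rule `Q'` with respect to the pre-data coding distribution `P_H`. -/
def rateOf {C S H : Type*} [Fintype C] [Fintype S] [Fintype H]
    (PCS : C → S → ℝ) (PH : H → ℝ) (Q' : S → H → ℝ) : ℝ :=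
  ∑ c, ∑ s, PCS c s * klNats (Q' s) PH


private lemma drb_hasDerivAt_aux1 {x : ℝ} (hx : 0 < x) :
    HasDerivAt (fun y : ℝ => Real.log y + 4*(y+1)⁻¹) (x⁻¹ - 4*((x+1)^2)⁻¹) x := by
  have h1 : HasDerivAt (fun y : ℝ => y + 1) 1 x := (hasDerivAt_id x).add_const 1
  have h2 : HasDerivAt (fun y : ℝ => (y+1)⁻¹) (-(1/(x+1)^2)) x := by
    have : HasDerivAt (fun y : ℝ => (y+1)⁻¹) _ x := h1.inv (by positivity : x + 1 ≠ 0)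
    convert this using 1
    ring
  have h3 : HasDerivAt (fun y : ℝ => Real.log y + 4*(y+1)⁻¹) _ x := (Real.hasDerivAt_log hx.ne').add (h2.const_mul 4)
  convert h3 using 1
  field_simp
  ring

private lemma drb_log_ge_pade {x : ℝ} (hx : 1 ≤ x) : 2*(x-1)/(x+1) ≤ Real.log x := by
  have hmono : MonotoneOn (fun y : ℝ => Real.log y + 4*(y+1)⁻¹) (Set.Ici 1) := by
    apply monotoneOn_of_deriv_nonneg (convex_Ici 1)
    · intro y hy
      have hy0 : (0:ℝ) < y := lt_of_lt_of_le one_pos hy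
      exact (drb_hasDerivAt_aux1 hy0).continuousAt.continuousWithinAt
    · intro y hy
      rw [interior_Ici] at hy
      have hy0 : (0:ℝ) < y := lt_trans one_pos hy
      exact (drb_hasDerivAt_aux1 hy0).differentiableAt.differentiableWithinAt
    · intro y hy
      rw [interior_Ici] at hy
      have hy1 : (1:ℝ) < y := hy
      have hy0 : (0:ℝ) < y := lt_trans one_pos hy1
      rw [(drb_hasDerivAt_aux1 hy0).deriv]
      have e : y⁻¹ - 4*((y+1)^2)⁻¹ = (y-1)^2 / (y * (y+1)^2) := by
        field_simp
        ring
      rw [e]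
      positivity
  have h2 := hmono (Set.self_mem_Ici) (Set.mem_Ici.mpr hx) hx
  simp only [Real.log_one] at h2
  have hx1 : (0:ℝ) < x + 1 := by linarith
  have e : 2*(x-1)/(x+1) = 2 - 4*(x+1)⁻¹ := by field_simp; ring
  rw [e]
  norm_num at h2
  linarith

private lemma drb_log_le_pade {x : ℝ} (hx0 : 0 < x) (hx : x ≤ 1) : Real.log x ≤ 2*(x-1)/(x+1) := by
  have hinv : 1 ≤ x⁻¹ := (one_le_inv_iff₀).mpr ⟨hx0, hx⟩
  have h := drb_log_ge_pade hinv
  rw [Real.log_inv] at h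
  have e : 2*(x⁻¹-1)/(x⁻¹+1) = -(2*(x-1)/(x+1)) := by
    rw [div_eq_iff (by positivity), neg_mul]
    field_simp
    ring
  rw [e] at h
  linarith


private noncomputable def drb_gfun (x : ℝ) : ℝ := x * Real.log x - (5/2)*x + 7 - (27/2)*(x+2)⁻¹

private lemma drb_hasDerivAt_gfun {x : ℝ} (hx : 0 < x) :
    HasDerivAt drb_gfun (Real.log x - 3/2 + (27/2)*((x+2)^2)⁻¹) x := by
  have h1 : HasDerivAt (fun y : ℝ => y + 2) 1 x := (hasDerivAt_id x).add_const 2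
  have h2 : HasDerivAt (fun y : ℝ => (y+2)⁻¹) (-(1/(x+2)^2)) x := by
    have : HasDerivAt (fun y : ℝ => (y+2)⁻¹) _ x := h1.inv (by positivity : x + 2 ≠ 0)
    convert this using 1
    ring
  have h3 := ((Real.hasDerivAt_mul_log hx.ne').sub ((hasDerivAt_id x).const_mul (5/2))).add_const 7
  have h4 : HasDerivAt drb_gfun _ x := h3.sub (h2.const_mul (27/2))
  convert h4 using 1
  field_simp
  ring

private lemma drb_gfun_deriv_eq {x : ℝ} (hx : 0 < x) :
    deriv drb_gfun x = Real.log x - 3/2 + (27/2)*((x+2)^2)⁻¹ := (drb_hasDerivAt_gfun hx).deriv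

private lemma drb_pade_identity {x : ℝ} (hx : 0 < x) :
    2*(x-1)/(x+1) - 3/2 + (27/2)*((x+2)^2)⁻¹ = (x-1)^3 / (2*(x+1)*(x+2)^2) := by
  field_simp
  ring

private lemma drb_gfun_one : drb_gfun 1 = 0 := by
  simp [drb_gfun, Real.log_one]
  norm_num

private lemma drb_gfun_nonneg {x : ℝ} (hx : 0 < x) : 0 ≤ drb_gfun x := by
  rcases le_total 1 x with h1 | h1
  · have hmono : MonotoneOn drb_gfun (Set.Ici 1) := by
      apply monotoneOn_of_deriv_nonneg (convex_Ici 1)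
      · intro y hy
        exact (drb_hasDerivAt_gfun (lt_of_lt_of_le one_pos hy)).continuousAt.continuousWithinAt
      · intro y hy
        rw [interior_Ici] at hy
        exact (drb_hasDerivAt_gfun (lt_trans one_pos hy)).differentiableAt.differentiableWithinAt
      · intro y hy
        rw [interior_Ici] at hy
        have hy1 : (1:ℝ) < y := hy
        have hy0 : (0:ℝ) < y := lt_trans one_pos hy1
        rw [drb_gfun_deriv_eq hy0]
        have hp := drb_log_ge_pade hy1.le
        have hid := drb_pade_identity hy0
        have : (0:ℝ) ≤ (y-1)^3 / (2*(y+1)*(y+2)^2) := by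
          apply div_nonneg
          · nlinarith [sq_nonneg (y-1)]
          · positivity
        linarith
    have := hmono Set.self_mem_Ici (Set.mem_Ici.mpr h1) h1
    rw [drb_gfun_one] at this
    exact this
  · have hanti : AntitoneOn drb_gfun (Set.Ioc 0 1) := by
      apply antitoneOn_of_deriv_nonpos (convex_Ioc 0 1)
      · intro y hy
        exact (drb_hasDerivAt_gfun hy.1).continuousAt.continuousWithinAt
      · intro y hy
        rw [interior_Ioc] at hy
        exact (drb_hasDerivAt_gfun hy.1).differentiableAt.differentiableWithinAt
      · intro y hy
        rw [interior_Ioc] at hy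
        have hy0 : (0:ℝ) < y := hy.1
        rw [drb_gfun_deriv_eq hy0]
        have hp := drb_log_le_pade hy0 hy.2.le
        have hid := drb_pade_identity hy0
        have hc : (y-1)^3 / (2*(y+1)*(y+2)^2) ≤ 0 := by
          apply div_nonpos_of_nonpos_of_nonneg
          · nlinarith [mul_nonneg (by linarith [hy.2] : (0:ℝ) ≤ 1 - y) (sq_nonneg (y-1))]
          · positivity
        linarith
    have := hanti (Set.mem_Ioc.mpr ⟨hx, h1⟩) (Set.mem_Ioc.mpr ⟨one_pos, le_refl 1⟩) h1
    rw [drb_gfun_one] at this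
    exact this

private lemma drb_mul_log_lb {x : ℝ} (hx : 0 ≤ x) : 3*(x-1)^2/(2*x+4) ≤ x * Real.log x - x + 1 := by
  rcases eq_or_lt_of_le hx with h0 | h0
  · rw [← h0]
    simp [Real.log_zero]
    norm_num
  · have hg := drb_gfun_nonneg h0
    have e : 3*(x-1)^2/(2*x+4) = (3/2)*x - 6 + (27/2)*(x+2)⁻¹ := by
      rw [div_eq_iff (by positivity)]
      field_simp
      ring
    rw [e]
    simp only [drb_gfun] at hg
    linarith

private lemma drb_sub_le_mul_log {y v : ℝ} (hy : 0 ≤ y) (hv : 0 < v) : y - v ≤ y * Real.log (y / v) := by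
  rcases eq_or_lt_of_le hy with h0 | h0
  · rw [← h0]; simpa using hv.le
  · have h := Real.one_sub_inv_le_log_of_pos (div_pos h0 hv)
    have e : (y/v)⁻¹ = v/y := by field_simp
    rw [e] at h
    have := mul_le_mul_of_nonneg_left h h0.le
    have e2 : y * (1 - v/y) = y - v := by field_simp
    nlinarith


private lemma drb_loss_diff_le {H : Type*} [Fintype H] {a b : H → ℝ} (ha : IsPMF a) (hb : IsPMF b)
    {L : H → ℝ} {Lmax : ℝ} (hL : ∀ h, 0 ≤ L h ∧ L h ≤ Lmax) :
    (∑ h, b h * L h) - (∑ h, a h * L h) ≤ Lmax/2 * ∑ h, |a h - b h| := by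
  have hpt : ∀ h, b h * L h - a h * L h ≤ Lmax/2 * (|a h - b h| + (b h - a h)) := by
    intro h
    rcases le_total (a h) (b h) with h' | h'
    · rw [abs_of_nonpos (by linarith)]
      nlinarith [mul_le_mul_of_nonneg_left (hL h).2 (sub_nonneg.2 h')]
    · rw [abs_of_nonneg (by linarith)]
      nlinarith [mul_nonneg (sub_nonneg.2 h') (hL h).1]
  calc (∑ h, b h * L h) - (∑ h, a h * L h) = ∑ h, (b h * L h - a h * L h) := by
        rw [Finset.sum_sub_distrib]
    _ ≤ ∑ h, Lmax/2 * (|a h - b h| + (b h - a h)) := Finset.sum_le_sum fun h _ => hpt h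
    _ = Lmax/2 * ∑ h, |a h - b h| := by
        rw [← Finset.mul_sum, Finset.sum_add_distrib, Finset.sum_sub_distrib, hb.2, ha.2]
        ring

private lemma drb_pinsker_fin {H : Type*} [Fintype H] {b v : H → ℝ} (hb : IsPMF b) (hv : IsPMF v)
    (hsupp : ∀ h, v h = 0 → b h = 0) :
    (∑ h, |b h - v h|)^2 ≤ 2 * klNats b v := by
  have hden : ∀ h, (0:ℝ) ≤ 2*b h + 4*v h := fun h => by linarith [hb.1 h, hv.1 h]
  have hpt : ∀ h, 3*(b h - v h)^2/(2*b h + 4*v h) ≤ b h * Real.log (b h / v h) - b h + v h := by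
    intro h
    rcases eq_or_lt_of_le (hv.1 h) with hv0 | hv0
    · have hb0 := hsupp h hv0.symm
      rw [hb0, ← hv0]
      norm_num
    · have hbnn := hb.1 h
      have key := drb_mul_log_lb (div_nonneg hbnn hv0.le)
      calc 3*(b h - v h)^2/(2*b h + 4*v h)
          = v h * (3*((b h)/(v h)-1)^2/(2*((b h)/(v h))+4)) := by
            rw [eq_comm, mul_comm, div_mul_eq_mul_div, div_eq_div_iff (by positivity) (by positivity)]
            field_simp
        _ ≤ v h * ((b h)/(v h) * Real.log ((b h)/(v h)) - (b h)/(v h) + 1) :=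
            mul_le_mul_of_nonneg_left key hv0.le
        _ = b h * Real.log (b h / v h) - b h + v h := by
            field_simp
  have hsum1 : ∑ h, 3*(b h - v h)^2/(2*b h + 4*v h) ≤ klNats b v := by
    calc ∑ h, 3*(b h - v h)^2/(2*b h + 4*v h)
        ≤ ∑ h, (b h * Real.log (b h / v h) - b h + v h) := Finset.sum_le_sum fun h _ => hpt h
      _ = klNats b v := by
          rw [klNats, Finset.sum_add_distrib, Finset.sum_sub_distrib, hb.2, hv.2]
          ring
  have hprod : ∀ h, Real.sqrt (3*(b h - v h)^2/(2*b h + 4*v h)) * Real.sqrt ((2*b h + 4*v h)/3)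
      = |b h - v h| := by
    intro h
    rw [← Real.sqrt_mul (div_nonneg (by positivity) (hden h))]
    rcases eq_or_lt_of_le (hden h) with h0 | h0
    · have hb0 : b h = 0 := by nlinarith [hb.1 h, hv.1 h]
      have hv0 : v h = 0 := by nlinarith [hb.1 h, hv.1 h]
      rw [hb0, hv0]
      norm_num
    · have e : 3*(b h - v h)^2/(2*b h + 4*v h) * ((2*b h + 4*v h)/3) = (b h - v h)^2 := by
        field_simp
        rw [mul_div_assoc, div_self (ne_of_gt (by linarith)), mul_one]
      rw [e, Real.sqrt_sq_eq_abs]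
  have hcs := Finset.sum_mul_sq_le_sq_mul_sq Finset.univ
      (fun h => Real.sqrt (3*(b h - v h)^2/(2*b h + 4*v h)))
      (fun h => Real.sqrt ((2*b h + 4*v h)/3))
  rw [Finset.sum_congr rfl (fun h _ => hprod h)] at hcs
  have e1 : ∑ h, (Real.sqrt (3*(b h - v h)^2/(2*b h + 4*v h)))^2
      = ∑ h, 3*(b h - v h)^2/(2*b h + 4*v h) :=
    Finset.sum_congr rfl fun h _ => Real.sq_sqrt (div_nonneg (by positivity) (hden h))
  have e2 : ∑ h, (Real.sqrt ((2*b h + 4*v h)/3))^2 = 2 := by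
    rw [Finset.sum_congr rfl (fun h _ => Real.sq_sqrt (div_nonneg (hden h) (by norm_num)))]
    rw [← Finset.sum_div, Finset.sum_add_distrib, ← Finset.mul_sum, ← Finset.mul_sum, hb.2, hv.2]
    norm_num
  rw [e1, e2] at hcs
  nlinarith [hcs, hsum1]


private lemma drb_exp_jensen {ι : Type*} (T : Finset ι) (w x : ι → ℝ) (hw : ∀ i ∈ T, 0 ≤ w i)
    (hw1 : ∑ i ∈ T, w i = 1) :
    Real.exp (∑ i ∈ T, w i * x i) ≤ ∑ i ∈ T, w i * Real.exp (x i) := by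
  have := convexOn_exp.map_sum_le hw hw1 (fun i _ => Set.mem_univ (x i))
  simpa only [smul_eq_mul] using this

private lemma drb_bh_fin {H : Type*} [Fintype H] {b v : H → ℝ} (hb : IsPMF b) (hv : IsPMF v)
    (hsupp : ∀ h, v h = 0 → b h = 0) :
    (∑ h, |b h - v h|)^2 ≤ 4 * (1 - Real.exp (-(klNats b v))) := by
  set T : Finset H := Finset.univ.filter (fun h => b h ≠ 0) with hT
  have hTpos : ∀ h ∈ T, 0 < b h := by
    intro h hh
    rcases (Finset.mem_filter.mp hh) with ⟨_, hne⟩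
    exact lt_of_le_of_ne (hb.1 h) (Ne.symm hne)
  have hTv : ∀ h ∈ T, 0 < v h := by
    intro h hh
    rcases eq_or_lt_of_le (hv.1 h) with h0 | h0
    · exact absurd (hsupp h h0.symm) (Finset.mem_filter.mp hh).2
    · exact h0
  have hklT : klNats b v = ∑ h ∈ T, b h * Real.log (b h / v h) := by
    rw [klNats, eq_comm]
    apply Finset.sum_filter_of_ne
    intro h _ hne
    intro hb0
    exact hne (by rw [hb0]; ring)
  have hwT : ∑ h ∈ T, b h = 1 := by
    rw [← hb.2, eq_comm]
    rw [← Finset.sum_filter_of_ne (p := fun h => b h ≠ 0) (fun h _ hne => hne)]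
  -- Jensen step
  have hjen := drb_exp_jensen T b (fun h => Real.log (Real.sqrt (v h / b h))) (fun h _ => (hb.1 h)) hwT
  have e1 : ∑ h ∈ T, b h * Real.log (Real.sqrt (v h / b h)) = -(klNats b v) / 2 := by
    have hper : ∀ h ∈ T, b h * Real.log (Real.sqrt (v h / b h)) = -(b h * Real.log (b h / v h)) / 2 := by
      intro h hh
      have hbp := hTpos h hh
      have hvp := hTv h hh
      rw [Real.log_sqrt (div_nonneg hvp.le hbp.le)]
      rw [show v h / b h = (b h / v h)⁻¹ by rw [inv_div], Real.log_inv]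
      ring
    rw [Finset.sum_congr rfl hper, ← Finset.sum_div, Finset.sum_neg_distrib, ← hklT]
  have e2 : ∑ h ∈ T, b h * Real.exp (Real.log (Real.sqrt (v h / b h)))
      = ∑ h ∈ T, Real.sqrt (b h * v h) := by
    apply Finset.sum_congr rfl
    intro h hh
    have hbp := hTpos h hh
    have hvp := hTv h hh
    rw [Real.exp_log (Real.sqrt_pos.mpr (div_pos hvp hbp))]
    have hrw : b h * Real.sqrt (v h / b h) = Real.sqrt ((b h)^2 * (v h / b h)) := by
      rw [Real.sqrt_mul (sq_nonneg _), Real.sqrt_sq hbp.le]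
    rw [hrw]
    congr 1
    field_simp
  have hstep1 : Real.exp (-(klNats b v) / 2) ≤ ∑ h, Real.sqrt (b h * v h) := by
    have hjen' : Real.exp (∑ h ∈ T, b h * Real.log (Real.sqrt (v h / b h))) ≤
        ∑ h ∈ T, b h * Real.exp (Real.log (Real.sqrt (v h / b h))) := hjen
    rw [e1, e2] at hjen'
    refine le_trans (le_trans (le_of_eq rfl) hjen') ?_
    apply Finset.sum_le_sum_of_subset_of_nonneg (Finset.subset_univ T)
    intro h _ _
    exact Real.sqrt_nonneg _
  -- Cauchy-Schwarz with min/max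
  have hminnn : ∀ h, (0:ℝ) ≤ min (b h) (v h) := fun h => le_min (hb.1 h) (hv.1 h)
  have hmaxnn : ∀ h, (0:ℝ) ≤ max (b h) (v h) := fun h => le_trans (hb.1 h) (le_max_left _ _)
  have hprod : ∀ h, Real.sqrt (min (b h) (v h)) * Real.sqrt (max (b h) (v h))
      = Real.sqrt (b h * v h) := by
    intro h
    rw [← Real.sqrt_mul (hminnn h), min_mul_max]
  have hcs := Finset.sum_mul_sq_le_sq_mul_sq Finset.univ
      (fun h => Real.sqrt (min (b h) (v h))) (fun h => Real.sqrt (max (b h) (v h)))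
  rw [Finset.sum_congr rfl (fun h _ => hprod h)] at hcs
  rw [Finset.sum_congr rfl (fun h _ => Real.sq_sqrt (hminnn h))] at hcs
  rw [Finset.sum_congr rfl (fun h _ => Real.sq_sqrt (hmaxnn h))] at hcs
  set D : ℝ := ∑ h, |b h - v h| with hD
  have hDnn : 0 ≤ D := Finset.sum_nonneg fun h _ => abs_nonneg _
  have hmin_eq : ∑ h, min (b h) (v h) = 1 - D/2 := by
    have : ∀ h, min (b h) (v h) = (b h + v h - |b h - v h|)/2 := by
      intro h
      rcases le_total (b h) (v h) with h' | h'
      · rw [min_eq_left h', abs_of_nonpos (by linarith)]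
        ring
      · rw [min_eq_right h', abs_of_nonneg (by linarith)]
        ring
    rw [Finset.sum_congr rfl (fun h _ => this h), ← Finset.sum_div, Finset.sum_sub_distrib,
      Finset.sum_add_distrib, hb.2, hv.2, hD]
    ring
  have hmax_eq : ∑ h, max (b h) (v h) = 1 + D/2 := by
    have : ∀ h, max (b h) (v h) = (b h + v h + |b h - v h|)/2 := by
      intro h
      rcases le_total (b h) (v h) with h' | h'
      · rw [max_eq_right h', abs_of_nonpos (by linarith)]
        ring
      · rw [max_eq_left h', abs_of_nonneg (by linarith)]
        ring
    rw [Finset.sum_congr rfl (fun h _ => this h), ← Finset.sum_div, Finset.sum_add_distrib,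
      Finset.sum_add_distrib, hb.2, hv.2, hD]
    ring
  rw [hmin_eq, hmax_eq] at hcs
  have hexp : Real.exp (-(klNats b v)) = (Real.exp (-(klNats b v)/2))^2 := by
    rw [sq, ← Real.exp_add]
    ring_nf
  have hfinal : Real.exp (-(klNats b v)) ≤ 1 - D^2/4 := by
    calc Real.exp (-(klNats b v)) = (Real.exp (-(klNats b v)/2))^2 := hexp
      _ ≤ (∑ h, Real.sqrt (b h * v h))^2 := by
          apply pow_le_pow_left₀ (Real.exp_nonneg _) hstep1
      _ ≤ (1 - D/2) * (1 + D/2) := hcs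
      _ = 1 - D^2/4 := by ring
  linarith


private lemma drb_kl_identity_bound {H : Type*} [Fintype H] {a b p : H → ℝ} (ha : IsPMF a) (hb : IsPMF b)
    (hp : ∀ h, 0 < p h) {t : ℝ} (ht0 : 0 < t) (ht1 : t < 1) :
    klNats b (fun h => (1-t)*a h + t*b h) ≤
      (klNats b p - klNats (fun h => (1-t)*a h + t*b h) p)
      - (1-t)/t * (klNats (fun h => (1-t)*a h + t*b h) p - klNats a p) := by
  set v : H → ℝ := fun h => (1-t)*a h + t*b h with hv
  clear_value v
  have hvnn : ∀ h, 0 ≤ v h := fun h => by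
    have := ha.1 h; have := hb.1 h
    simp only [hv]
    nlinarith
  have hvsum : ∑ h, v h = 1 := by
    simp only [hv]
    rw [Finset.sum_add_distrib, ← Finset.mul_sum, ← Finset.mul_sum, ha.2, hb.2]
    ring
  have hva : ∀ h, v h = 0 → a h = 0 := by
    intro h hz
    have h1 := ha.1 h; have h2 := hb.1 h
    simp only [hv] at hz
    nlinarith [mul_nonneg ht0.le h2, mul_nonneg (by linarith : (0:ℝ) ≤ 1-t) h1]
  have hvb : ∀ h, v h = 0 → b h = 0 := by
    intro h hz
    have h1 := ha.1 h; have h2 := hb.1 h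
    simp only [hv] at hz
    nlinarith [mul_nonneg ht0.le h2, mul_nonneg (by linarith : (0:ℝ) ≤ 1-t) h1]
  -- identity I1
  have I1 : klNats b p - klNats v p = klNats b v + ∑ h, (b h - v h) * Real.log (v h / p h) := by
    rw [klNats, klNats, klNats, ← Finset.sum_sub_distrib, ← Finset.sum_add_distrib]
    apply Finset.sum_congr rfl
    intro h _
    rcases eq_or_lt_of_le (hb.1 h) with hb0 | hb0
    · rw [← hb0]
      simp only [zero_mul, zero_sub, zero_add]
      ring
    · have hvpos : 0 < v h := by
        rcases eq_or_lt_of_le (hvnn h) with h0 | h0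
        · exact absurd (hvb h h0.symm) (ne_of_gt hb0)
        · exact h0
      rw [Real.log_div hb0.ne' (hp h).ne', Real.log_div hb0.ne' hvpos.ne',
        Real.log_div hvpos.ne' (hp h).ne']
      ring
  -- subgradient inequality I2
  have I2 : klNats v p - klNats a p ≤ ∑ h, (v h - a h) * (Real.log (v h / p h) + 1) := by
    rw [klNats, klNats, ← Finset.sum_sub_distrib]
    apply Finset.sum_le_sum
    intro h _
    rcases eq_or_lt_of_le (hvnn h) with h0 | h0
    · rw [← h0, hva h h0.symm]
      simp
    · rcases eq_or_lt_of_le (ha.1 h) with ha0 | ha0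
      · rw [← ha0]
        have expand : (v h - 0) * (Real.log (v h / p h) + 1)
            = v h * Real.log (v h / p h) + v h := by ring
        rw [expand]
        simp only [zero_mul, sub_zero]
        exact le_add_of_nonneg_right (hvnn h)
      · have key := drb_sub_le_mul_log ha0.le h0
        have e : a h * Real.log (a h / v h) = a h * Real.log (a h / p h) - a h * Real.log (v h / p h) := by
          rw [Real.log_div ha0.ne' (hp h).ne', Real.log_div ha0.ne' h0.ne',
            Real.log_div h0.ne' (hp h).ne']
          ring
        rw [e] at key
        nlinarith [key]
  -- E1 : relate the cross terms
  have E1 : ∑ h, (b h - v h) * Real.log (v h / p h)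
      = (1-t)/t * ∑ h, (v h - a h) * Real.log (v h / p h) := by
    rw [Finset.mul_sum]
    apply Finset.sum_congr rfl
    intro h _
    have e : b h - v h = (1-t)/t * (v h - a h) := by
      simp only [hv]
      field_simp
      ring
    rw [e]
    ring
  have E2 : ∑ h, (v h - a h) * (Real.log (v h / p h) + 1)
      = ∑ h, (v h - a h) * Real.log (v h / p h) := by
    have : ∀ h, (v h - a h) * (Real.log (v h / p h) + 1)
        = (v h - a h) * Real.log (v h / p h) + (v h - a h) := fun h => by ring
    rw [Finset.sum_congr rfl (fun h _ => this h), Finset.sum_add_distrib,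
      Finset.sum_sub_distrib, hvsum, ha.2]
    ring
  have hr : (0:ℝ) ≤ (1-t)/t := div_nonneg (by linarith) ht0.le
  have hI2' := mul_le_mul_of_nonneg_left I2 hr
  rw [E2] at hI2'
  linarith [I1, E1, hI2']
private lemma drb_dsum_sub {C S : Type*} [Fintype C] [Fintype S] (w : C → S → ℝ) (f g : S → ℝ) :
    ∑ c, ∑ s, w c s * (f s - g s) = (∑ c, ∑ s, w c s * f s) - ∑ c, ∑ s, w c s * g s := by
  simp [mul_sub, Finset.sum_sub_distrib]

private lemma drb_dsum_mul_left {C S : Type*} [Fintype C] [Fintype S] (w : C → S → ℝ) (k : ℝ) (f : S → ℝ) :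
    ∑ c, ∑ s, w c s * (k * f s) = k * ∑ c, ∑ s, w c s * f s := by
  rw [Finset.mul_sum]
  refine Finset.sum_congr rfl fun c _ => ?_
  rw [Finset.mul_sum]
  exact Finset.sum_congr rfl fun s _ => by ring


/-- **Distortion-rate bound for scheme 1** (Lemma 2, Eq. (9)): if `Q̂` minimizes
the expected divergence `𝓡` over a convex set of learning rules containing `Q`,
and `Δ_R = 𝓡(Q) − 𝓡(Q̂)`, then
`d_sem(Q, Q̂) ≤ L_max · min{√(Δ_R/2), √(1 − e^{−Δ_R})}`. -/
theorem distortion_rate_bound_scheme1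
    {C S H : Type*} [Fintype C] [Fintype S] [Fintype H]
    [Nonempty C] [Nonempty S] [Nonempty H]
    (PC : C → ℝ) (hPC : IsPMF PC)
    (PSC : C → S → ℝ) (hPSC : ∀ c, IsPMF (PSC c))
    (PCS : C → S → ℝ) (hPCS : PCS = fun c s => PC c * PSC c s)
    (Lmax : ℝ) (L : C → H → ℝ) (hL : ∀ c h, 0 ≤ L c h ∧ L c h ≤ Lmax)
    (PH : H → ℝ) (hPH : IsPMF PH) (hPHpos : ∀ h, 0 < PH h)
    (𝒬 : Set (S → H → ℝ)) (h𝒬conv : Convex ℝ 𝒬)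
    (h𝒬rule : ∀ Q' ∈ 𝒬, IsRule Q')
    (Q : S → H → ℝ) (hQmem : Q ∈ 𝒬)
    (Qhat : S → H → ℝ) (hQhatmem : Qhat ∈ 𝒬)
    (hmin : ∀ Q' ∈ 𝒬, rateOf PCS PH Qhat ≤ rateOf PCS PH Q')
    (ΔR : ℝ) (hΔR : ΔR = rateOf PCS PH Q - rateOf PCS PH Qhat) :
    dsem PCS L Q Qhat ≤
      Lmax * min (Real.sqrt (ΔR / 2)) (Real.sqrt (1 - Real.exp (-ΔR))) := by
  classical
  obtain ⟨c₀⟩ := ‹Nonempty C›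
  obtain ⟨h₀⟩ := ‹Nonempty H›
  have hLmax : 0 ≤ Lmax := le_trans (hL c₀ h₀).1 (hL c₀ h₀).2
  have hw0 : ∀ c s, 0 ≤ PCS c s := by
    intro c s
    rw [hPCS]
    exact mul_nonneg (hPC.1 c) ((hPSC c).1 s)
  have hwsum : ∑ c, ∑ s, PCS c s = 1 := by
    simp only [hPCS]
    rw [Finset.sum_congr rfl (fun c _ => by rw [← Finset.mul_sum, (hPSC c).2, mul_one]), hPC.2]
  have hQpmf : ∀ s, IsPMF (Q s) := h𝒬rule Q hQmem
  have hQhpmf : ∀ s, IsPMF (Qhat s) := h𝒬rule Qhat hQhatmem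
  have hΔR0 : 0 ≤ ΔR := by
    rw [hΔR]
    linarith [hmin Q hQmem]
  set D : S → ℝ := fun s => ∑ h, |Q s h - Qhat s h| with hD
  have hDnn : ∀ s, 0 ≤ D s := fun s => Finset.sum_nonneg fun h _ => abs_nonneg _
  set W : ℝ := ∑ c, ∑ s, PCS c s * D s with hW
  have hWnn : 0 ≤ W :=
    Finset.sum_nonneg fun c _ => Finset.sum_nonneg fun s _ => mul_nonneg (hw0 c s) (hDnn s)
  -- Step 1 : dsem ≤ Lmax/2 * W
  have hstep1 : dsem PCS L Q Qhat ≤ Lmax/2 * W := by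
    rw [dsem, hW, Finset.mul_sum]
    apply Finset.sum_le_sum
    intro c _
    rw [Finset.mul_sum]
    apply Finset.sum_le_sum
    intro s _
    rw [show Lmax/2 * (PCS c s * D s) = PCS c s * (Lmax/2 * D s) by ring]
    apply mul_le_mul_of_nonneg_left _ (hw0 c s)
    have : trueLoss L c (Qhat s) - trueLoss L c (Q s) ≤ Lmax/2 * ∑ h, |Q s h - Qhat s h| :=
      drb_loss_diff_le (hQpmf s) (hQhpmf s) (fun h => hL c h)
    exact this
  -- Step 2 : for every t ∈ (0,1)
  have hkey : ∀ t : ℝ, t ∈ Set.Ioo (0:ℝ) 1 →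
      (1-t)^2 * (W/2)^2 ≤ min (ΔR/2) (1 - Real.exp (-ΔR)) := by
    rintro t ⟨ht0, ht1⟩
    set Qt : S → H → ℝ := fun s h => (1-t)*Qhat s h + t*Q s h with hQt
    have hQtmem : Qt ∈ 𝒬 := by
      have hmem := h𝒬conv hQhatmem hQmem (by linarith : (0:ℝ) ≤ 1 - t) ht0.le (by ring)
      have e : Qt = (1-t) • Qhat + t • Q := by
        funext s h
        simp [hQt, Pi.smul_apply, smul_eq_mul]
      rwa [e]
    have hQtpmf : ∀ s, IsPMF (Qt s) := h𝒬rule Qt hQtmem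
    -- expected KL between Q and Qt is at most ΔR
    have hklsum : ∑ c, ∑ s, PCS c s * klNats (Q s) (Qt s) ≤ ΔR := by
      have hper : ∀ s, klNats (Q s) (Qt s) ≤
          (klNats (Q s) PH - klNats (Qt s) PH)
          - (1-t)/t * (klNats (Qt s) PH - klNats (Qhat s) PH) := fun s =>
        drb_kl_identity_bound (hQhpmf s) (hQpmf s) hPHpos ht0 ht1
      have h1 : ∑ c, ∑ s, PCS c s * klNats (Q s) (Qt s) ≤
          ∑ c, ∑ s, PCS c s * ((klNats (Q s) PH - klNats (Qt s) PH)
            - (1-t)/t * (klNats (Qt s) PH - klNats (Qhat s) PH)) :=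
        Finset.sum_le_sum fun c _ => Finset.sum_le_sum fun s _ =>
          mul_le_mul_of_nonneg_left (hper s) (hw0 c s)
      have h2 : ∑ c, ∑ s, PCS c s * ((klNats (Q s) PH - klNats (Qt s) PH)
            - (1-t)/t * (klNats (Qt s) PH - klNats (Qhat s) PH))
          = (rateOf PCS PH Q - rateOf PCS PH Qt)
            - (1-t)/t * (rateOf PCS PH Qt - rateOf PCS PH Qhat) := by
        simp only [drb_dsum_sub, drb_dsum_mul_left, rateOf]
      rw [h2] at h1
      have hmin' : rateOf PCS PH Qhat ≤ rateOf PCS PH Qt := hmin Qt hQtmem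
      have hr : (0:ℝ) ≤ (1-t)/t := div_nonneg (by linarith) ht0.le
      have hnn : 0 ≤ (1-t)/t * (rateOf PCS PH Qt - rateOf PCS PH Qhat) :=
        mul_nonneg hr (by linarith)
      rw [hΔR]
      linarith
    -- support condition
    have hsupp : ∀ s h, Qt s h = 0 → Q s h = 0 := by
      intro s h hz
      have h1 := (hQhpmf s).1 h
      have h2 := (hQpmf s).1 h
      simp only [hQt] at hz
      by_contra hne
      have hQpos : 0 < Q s h := lt_of_le_of_ne h2 (Ne.symm hne)
      nlinarith [mul_pos ht0 hQpos, mul_nonneg (by linarith : (0:ℝ) ≤ 1-t) h1]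
    -- relation between total variations
    have hDrel : ∀ s, ∑ h, |Q s h - Qt s h| = (1-t) * D s := by
      intro s
      rw [hD, Finset.mul_sum]
      apply Finset.sum_congr rfl
      intro h _
      rw [show Q s h - Qt s h = (1-t)*(Q s h - Qhat s h) by simp only [hQt]; ring]
      rw [abs_mul, abs_of_nonneg (by linarith : (0:ℝ) ≤ 1-t)]
    -- pointwise Pinsker and BH
    have hpin : ∀ s, (1-t)^2 * (D s)^2 ≤ 2 * klNats (Q s) (Qt s) := by
      intro s
      have hh := drb_pinsker_fin (hQpmf s) (hQtpmf s) (hsupp s)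
      rw [hDrel s] at hh
      calc (1-t)^2 * (D s)^2 = ((1-t) * D s)^2 := by ring
        _ ≤ 2 * klNats (Q s) (Qt s) := hh
    have hbh : ∀ s, (1-t)^2 * (D s)^2 ≤ 4 * (1 - Real.exp (-(klNats (Q s) (Qt s)))) := by
      intro s
      have hh := drb_bh_fin (hQpmf s) (hQtpmf s) (hsupp s)
      rw [hDrel s] at hh
      calc (1-t)^2 * (D s)^2 = ((1-t) * D s)^2 := by ring
        _ ≤ 4 * (1 - Real.exp (-(klNats (Q s) (Qt s)))) := hh
    -- aggregate second moment
    set E2 : ℝ := ∑ c, ∑ s, PCS c s * (D s)^2 with hE2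
    -- Cauchy-Schwarz: W^2 ≤ E2
    have hcs : W^2 ≤ E2 := by
      have hW' : (∑ x : C × S, Real.sqrt (PCS x.1 x.2) * (Real.sqrt (PCS x.1 x.2) * D x.2)) = W := by
        have e0 : ∀ x : C × S, Real.sqrt (PCS x.1 x.2) * (Real.sqrt (PCS x.1 x.2) * D x.2)
            = PCS x.1 x.2 * D x.2 := fun x => by
          rw [← mul_assoc, Real.mul_self_sqrt (hw0 x.1 x.2)]
        rw [Finset.sum_congr rfl (fun x _ => e0 x)]
        exact Fintype.sum_prod_type _
      have hE2' : (∑ x : C × S, (Real.sqrt (PCS x.1 x.2) * D x.2)^2) = E2 := by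
        have e0 : ∀ x : C × S, (Real.sqrt (PCS x.1 x.2) * D x.2)^2
            = PCS x.1 x.2 * (D x.2)^2 := fun x => by
          rw [mul_pow, Real.sq_sqrt (hw0 x.1 x.2)]
        rw [Finset.sum_congr rfl (fun x _ => e0 x)]
        exact Fintype.sum_prod_type _
      have hsq : ∑ x : C × S, (Real.sqrt (PCS x.1 x.2))^2 = 1 := by
        rw [Finset.sum_congr rfl (fun x _ => Real.sq_sqrt (hw0 x.1 x.2)), Fintype.sum_prod_type]
        exact hwsum
      have hcs' := Finset.sum_mul_sq_le_sq_mul_sq Finset.univ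
        (fun x : C × S => Real.sqrt (PCS x.1 x.2))
        (fun x : C × S => Real.sqrt (PCS x.1 x.2) * D x.2)
      rw [hsq, one_mul, hW', hE2'] at hcs'
      exact hcs'
    -- Pinsker aggregate
    have hPagg : (1-t)^2 * E2 ≤ 2 * ΔR := by
      have e : (1-t)^2 * E2 = ∑ c, ∑ s, PCS c s * ((1-t)^2 * (D s)^2) := by
        rw [drb_dsum_mul_left, hE2]
      rw [e]
      calc ∑ c, ∑ s, PCS c s * ((1-t)^2 * (D s)^2)
          ≤ ∑ c, ∑ s, PCS c s * (2 * klNats (Q s) (Qt s)) :=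
            Finset.sum_le_sum fun c _ => Finset.sum_le_sum fun s _ =>
              mul_le_mul_of_nonneg_left (hpin s) (hw0 c s)
        _ = 2 * ∑ c, ∑ s, PCS c s * klNats (Q s) (Qt s) := drb_dsum_mul_left _ _ _
        _ ≤ 2 * ΔR := by linarith [hklsum]
    -- BH aggregate
    have hBagg : (1-t)^2 * E2 ≤ 4 * (1 - Real.exp (-ΔR)) := by
      have e : (1-t)^2 * E2 = ∑ c, ∑ s, PCS c s * ((1-t)^2 * (D s)^2) := by
        rw [drb_dsum_mul_left, hE2]
      have hstep : (1-t)^2 * E2 ≤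
          4 * (1 - ∑ c, ∑ s, PCS c s * Real.exp (-(klNats (Q s) (Qt s)))) := by
        rw [e]
        calc ∑ c, ∑ s, PCS c s * ((1-t)^2 * (D s)^2)
            ≤ ∑ c, ∑ s, PCS c s * (4 * (1 - Real.exp (-(klNats (Q s) (Qt s))))) :=
              Finset.sum_le_sum fun c _ => Finset.sum_le_sum fun s _ =>
                mul_le_mul_of_nonneg_left (hbh s) (hw0 c s)
          _ = 4 * ∑ c, ∑ s, PCS c s * (1 - Real.exp (-(klNats (Q s) (Qt s)))) :=
              drb_dsum_mul_left _ _ _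
          _ = 4 * (1 - ∑ c, ∑ s, PCS c s * Real.exp (-(klNats (Q s) (Qt s)))) := by
              rw [drb_dsum_sub PCS (fun _ => (1:ℝ)) (fun s => Real.exp (-(klNats (Q s) (Qt s))))]
              simp only [mul_one, hwsum]
      have hjen : Real.exp (-(∑ c, ∑ s, PCS c s * klNats (Q s) (Qt s))) ≤
          ∑ c, ∑ s, PCS c s * Real.exp (-(klNats (Q s) (Qt s))) := by
        have hj := drb_exp_jensen Finset.univ (fun x : C × S => PCS x.1 x.2)
          (fun x : C × S => -(klNats (Q x.2) (Qt x.2)))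
          (fun x _ => hw0 x.1 x.2)
          (by rw [Fintype.sum_prod_type]; exact hwsum)
        have e1 : ∑ x : C × S, PCS x.1 x.2 * -(klNats (Q x.2) (Qt x.2))
            = -(∑ c, ∑ s, PCS c s * klNats (Q s) (Qt s)) := by
          have e0 : (∑ x : C × S, PCS x.1 x.2 * -(klNats (Q x.2) (Qt x.2)))
              = ∑ c, ∑ s, PCS c s * -(klNats (Q s) (Qt s)) := Fintype.sum_prod_type _
          rw [e0, ← Finset.sum_neg_distrib]
          apply Finset.sum_congr rfl
          intro c _
          rw [← Finset.sum_neg_distrib]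
          exact Finset.sum_congr rfl fun s _ => by ring
        have e2 : ∑ x : C × S, PCS x.1 x.2 * Real.exp (-(klNats (Q x.2) (Qt x.2)))
            = ∑ c, ∑ s, PCS c s * Real.exp (-(klNats (Q s) (Qt s))) :=
          Fintype.sum_prod_type _
        rw [e1, e2] at hj
        exact hj
      have hmono : Real.exp (-ΔR) ≤ Real.exp (-(∑ c, ∑ s, PCS c s * klNats (Q s) (Qt s))) :=
        Real.exp_le_exp.2 (by linarith [hklsum])
      linarith
    -- conclude for this t
    have hWE : (1-t)^2 * W^2 ≤ (1-t)^2 * E2 :=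
      mul_le_mul_of_nonneg_left hcs (sq_nonneg _)
    apply le_min
    · nlinarith [hWE, hPagg]
    · nlinarith [hWE, hBagg]
  -- limit t → 0⁺
  have hlim : (W/2)^2 ≤ min (ΔR/2) (1 - Real.exp (-ΔR)) := by
    have hten : Filter.Tendsto (fun t : ℝ => (1-t)^2 * (W/2)^2) (𝓝[>] (0:ℝ))
        (𝓝 ((W/2)^2)) := by
      have hco : Filter.Tendsto (fun t : ℝ => (1-t)^2 * (W/2)^2) (𝓝 (0:ℝ))
          (𝓝 ((1-(0:ℝ))^2 * (W/2)^2)) := by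
        exact (((continuous_const.sub continuous_id).pow 2).mul continuous_const).tendsto 0
      have : ((1:ℝ)-(0:ℝ))^2 * (W/2)^2 = (W/2)^2 := by norm_num
      rw [this] at hco
      exact hco.mono_left nhdsWithin_le_nhds
    apply le_of_tendsto hten
    filter_upwards [Ioo_mem_nhdsGT (zero_lt_one)] with t ht
    exact hkey t ht
  -- finish
  have hM0 : 0 ≤ min (ΔR/2) (1 - Real.exp (-ΔR)) := by
    apply le_min
    · linarith
    · have := Real.exp_le_exp.2 (neg_nonpos.mpr hΔR0)
      rw [Real.exp_zero] at this
      linarith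
  have hWle : W/2 ≤ Real.sqrt (min (ΔR/2) (1 - Real.exp (-ΔR))) := by
    rw [Real.le_sqrt (by positivity) hM0]
    exact hlim
  have hsqrtmin : Real.sqrt (min (ΔR/2) (1 - Real.exp (-ΔR)))
      = min (Real.sqrt (ΔR/2)) (Real.sqrt (1 - Real.exp (-ΔR))) := by
    rcases le_total (ΔR/2) (1 - Real.exp (-ΔR)) with h | h
    · rw [min_eq_left h, min_eq_left (Real.sqrt_le_sqrt h)]
    · rw [min_eq_right h, min_eq_right (Real.sqrt_le_sqrt h)]
  calc dsem PCS L Q Qhat ≤ Lmax/2 * W := hstep1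
    _ = Lmax * (W/2) := by ring
    _ ≤ Lmax * Real.sqrt (min (ΔR/2) (1 - Real.exp (-ΔR))) :=
        mul_le_mul_of_nonneg_left hWle hLmax
    _ = Lmax * min (Real.sqrt (ΔR/2)) (Real.sqrt (1 - Real.exp (-ΔR))) := by rw [hsqrtmin]
end
end

section
/- Distortion-rate bound for scheme 2 (Lemma 2, Eq. (10)): Assume the loss satisfies 0 ≤ L_c(h) ≤ L_max for all c∈𝒞, h∈ℋ. Let P_H be a full-support pmf on ℋ, let 𝒬 be a convex set of learning rules containing Q, and let Q̂ ∈ 𝒬 minimize 𝓡(Q') = E_{C,S}[D_KL(Q'(·|S) ‖ P_H)] over 𝒬 (divergences in nats). Suppose the available communication rate R is split as 𝓡(Q̂) = R − I(S;Ŝ|Ĥ), where I(S;Ŝ|Ĥ) ≥ 0 is the conditional mutual information consumed by conveying an intermediate dataset reconstruction Ŝ (scheme 2: Markov chain S → Ŝ → Ĥ). Set Δ_R = 𝓡(Q) − R. Then d_sem(Q, Q̂) ≤ L_max · min{ √((Δ_R + I(S;Ŝ|Ĥ))/2), √(1 − e^{−(Δ_R + I(S;Ŝ|Ĥ))}) }.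 -/
open Finset Filter Topology Classical

noncomputable section

/-- Conditional mutual information `I(X;Y|Z)` in nats of a joint pmf `p` on
`X × Y × Z`, defined as `∑ p(x,y,z)·ln( p(x,y,z)·p(z) / (p(x,z)·p(y,z)) )`
(with `0 · ln 0 = 0`). -/
def condMI {X Y Z : Type*} [Fintype X] [Fintype Y] [Fintype Z]
    (p : X → Y → Z → ℝ) : ℝ :=
  ∑ x, ∑ y, ∑ z, p x y z *
    Real.log ((p x y z * ∑ x', ∑ y', p x' y' z) /
      ((∑ y', p x y' z) * (∑ x', p x' y z)))

namespace DRB2Aux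

lemma one_sub_inv_le_log {x : ℝ} (hx : 0 < x) : 1 - x⁻¹ ≤ Real.log x := by
  have h := Real.log_le_sub_one_of_pos (inv_pos.2 hx)
  rw [Real.log_inv] at h
  linarith

/-- pointwise lower bound `a - b ≤ a log(a/b)` for `0 ≤ a`, `0 ≤ b`,
with `a > 0 → b > 0`. -/
lemma sub_le_mul_log {a b : ℝ} (ha : 0 ≤ a) (hb : 0 ≤ b) (hab : 0 < a → 0 < b) :
    a - b ≤ a * Real.log (a / b) := by
  rcases eq_or_lt_of_le ha with h0 | ha'
  · simp [← h0, hb]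
  · have hb' := hab ha'
    have hx : 0 < a / b := div_pos ha' hb'
    have h := one_sub_inv_le_log hx
    have hinv : (a / b)⁻¹ = b / a := by rw [inv_div]
    rw [hinv] at h
    have := mul_le_mul_of_nonneg_left h (le_of_lt ha')
    have hba : a * (b / a) = b := by field_simp
    nlinarith [this]

private def gAux (y : ℝ) : ℝ := (y + 1) * Real.log y - 2 * (y - 1)

private def fAux (y : ℝ) : ℝ :=
  (2 * y + 4) * (y * Real.log y - y + 1) - 3 * (y - 1) ^ 2

private lemma hasDerivAt_gAux {x : ℝ} (hx : 0 < x) :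
    HasDerivAt gAux (Real.log x + (x + 1) * x⁻¹ - 2) x := by
  have h1 : HasDerivAt (fun y : ℝ => (y + 1) * Real.log y)
      (1 * Real.log x + (x + 1) * x⁻¹) x :=
    (((hasDerivAt_id x).add_const 1)).mul (Real.hasDerivAt_log hx.ne')
  have h2 : HasDerivAt (fun y : ℝ => 2 * (y - 1)) 2 x := by
    simpa using ((hasDerivAt_id x).sub_const 1).const_mul 2
  have := h1.sub h2
  exact this.congr_deriv (by ring)

private lemma gAux_deriv_nonneg {x : ℝ} (hx : 0 < x) :
    0 ≤ Real.log x + (x + 1) * x⁻¹ - 2 := by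
  have h := one_sub_inv_le_log hx
  have hxi : x * x⁻¹ = 1 := mul_inv_cancel₀ hx.ne'
  nlinarith [h, hxi]

private lemma gAux_nonneg {x : ℝ} (hx : 1 ≤ x) : 0 ≤ gAux x := by
  have mono : MonotoneOn gAux (Set.Ici 1) := by
    apply monotoneOn_of_hasDerivWithinAt_nonneg (convex_Ici 1)
      (f' := fun y => Real.log y + (y + 1) * y⁻¹ - 2)
    · intro y hy
      exact (hasDerivAt_gAux (lt_of_lt_of_le one_pos hy)).continuousAt.continuousWithinAt
    · intro y hy
      rw [interior_Ici] at hy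
      exact (hasDerivAt_gAux (lt_trans one_pos hy)).hasDerivWithinAt
    · intro y hy
      rw [interior_Ici] at hy
      exact gAux_deriv_nonneg (lt_trans one_pos hy)
  have h1 : gAux 1 = 0 := by simp [gAux]
  have := mono (Set.self_mem_Ici) hx hx
  linarith

private lemma gAux_nonpos {x : ℝ} (hx0 : 0 < x) (hx1 : x ≤ 1) : gAux x ≤ 0 := by
  have mono : MonotoneOn gAux (Set.Icc x 1) := by
    apply monotoneOn_of_hasDerivWithinAt_nonneg (convex_Icc x 1)
      (f' := fun y => Real.log y + (y + 1) * y⁻¹ - 2)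
    · intro y hy
      exact (hasDerivAt_gAux (lt_of_lt_of_le hx0 hy.1)).continuousAt.continuousWithinAt
    · intro y hy
      rw [interior_Icc] at hy
      exact (hasDerivAt_gAux (lt_trans hx0 hy.1)).hasDerivWithinAt
    · intro y hy
      rw [interior_Icc] at hy
      exact gAux_deriv_nonneg (lt_trans hx0 hy.1)
  have h1 : gAux 1 = 0 := by simp [gAux]
  have := mono (Set.left_mem_Icc.2 hx1) (Set.right_mem_Icc.2 hx1) hx1
  linarith

private lemma hasDerivAt_fAux {x : ℝ} (hx : 0 < x) :
    HasDerivAt fAux (4 * gAux x) x := by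
  have h1 : HasDerivAt (fun y : ℝ => y * Real.log y - y + 1)
      (Real.log x + 1 - 1) x :=
    ((Real.hasDerivAt_mul_log hx.ne').sub (hasDerivAt_id x)).add_const 1
  have h2 : HasDerivAt (fun y : ℝ => 2 * y + 4) 2 x := by
    simpa using ((hasDerivAt_id x).const_mul 2).add_const 4
  have h3 := h2.mul h1
  have h4 : HasDerivAt (fun y : ℝ => 3 * (y - 1) ^ 2) (3 * (2 * (x - 1) ^ 1 * 1)) x :=
    ((((hasDerivAt_id x).sub_const 1)).pow 2).const_mul 3
  have h5 := h3.sub h4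
  exact h5.congr_deriv (by unfold gAux; ring)

private lemma fAux_nonneg {x : ℝ} (hx : 0 < x) : 0 ≤ fAux x := by
  have hf1 : fAux 1 = 0 := by simp [fAux]
  rcases le_or_gt 1 x with h1 | h1
  · have mono : MonotoneOn fAux (Set.Ici 1) := by
      apply monotoneOn_of_hasDerivWithinAt_nonneg (convex_Ici 1)
        (f' := fun y => 4 * gAux y)
      · intro y hy
        exact (hasDerivAt_fAux (lt_of_lt_of_le one_pos hy)).continuousAt.continuousWithinAt
      · intro y hy
        rw [interior_Ici] at hy
        exact (hasDerivAt_fAux (lt_trans one_pos hy)).hasDerivWithinAt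
      · intro y hy
        rw [interior_Ici] at hy
        have := gAux_nonneg (le_of_lt hy)
        linarith
    have := mono Set.self_mem_Ici h1 h1
    linarith
  · have anti : AntitoneOn fAux (Set.Icc x 1) := by
      apply antitoneOn_of_hasDerivWithinAt_nonpos (convex_Icc x 1)
        (f' := fun y => 4 * gAux y)
      · intro y hy
        exact (hasDerivAt_fAux (lt_of_lt_of_le hx hy.1)).continuousAt.continuousWithinAt
      · intro y hy
        rw [interior_Icc] at hy
        exact (hasDerivAt_fAux (lt_trans hx hy.1)).hasDerivWithinAt
      · intro y hy
        rw [interior_Icc] at hy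
        have := gAux_nonpos (lt_trans hx hy.1) (le_of_lt hy.2)
        linarith
    have := anti (Set.left_mem_Icc.2 (le_of_lt h1)) (Set.right_mem_Icc.2 (le_of_lt h1))
      (le_of_lt h1)
    linarith

/-- the key single-variable inequality behind Pinsker. -/
lemma pinsker_pointwise_x {x : ℝ} (hx : 0 < x) :
    3 * (x - 1) ^ 2 ≤ (2 * x + 4) * (x * Real.log x - x + 1) := by
  have := fAux_nonneg hx
  simp only [fAux] at this
  linarith

/-- pointwise quadratic lower bound on a KL term. -/
lemma pinsker_pointwise {a b : ℝ} (ha : 0 ≤ a) (hb : 0 < b) :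
    3 * (a - b) ^ 2 ≤ (2 * a + 4 * b) * (a * Real.log (a / b) - a + b) := by
  rcases eq_or_lt_of_le ha with h0 | ha'
  · rw [← h0]
    simp
    nlinarith
  · have hx : 0 < a / b := div_pos ha' hb
    have hF := pinsker_pointwise_x hx
    have hab : a = a / b * b := (div_mul_cancel₀ a hb.ne').symm
    set x := a / b with hxdef
    rw [hab]
    calc 3 * (x * b - b) ^ 2 = b ^ 2 * (3 * (x - 1) ^ 2) := by ring
      _ ≤ b ^ 2 * ((2 * x + 4) * (x * Real.log x - x + 1)) :=
          mul_le_mul_of_nonneg_left hF (sq_nonneg b)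
      _ = (2 * (x * b) + 4 * b) * (x * b * Real.log x - x * b + b) := by ring





variable {α : Type*} [Fintype α]

lemma klNats_nonneg (μ ν : α → ℝ) (hμ0 : ∀ x, 0 ≤ μ x) (hν0 : ∀ x, 0 ≤ ν x)
    (hμ1 : ∑ x, μ x = 1) (hν1 : ∑ x, ν x = 1) (hac : ∀ x, 0 < μ x → 0 < ν x) :
    0 ≤ klNats μ ν := by
  have h : ∑ x, (μ x - ν x) ≤ klNats μ ν :=
    Finset.sum_le_sum fun x _ => sub_le_mul_log (hμ0 x) (hν0 x) (hac x)
  rw [Finset.sum_sub_distrib, hμ1, hν1] at h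
  linarith

/-- finite Pinsker inequality, squared form. -/
lemma pinsker_sq (μ ν : α → ℝ) (hμ0 : ∀ x, 0 ≤ μ x) (hν0 : ∀ x, 0 ≤ ν x)
    (hμ1 : ∑ x, μ x = 1) (hν1 : ∑ x, ν x = 1) (hac : ∀ x, 0 < μ x → 0 < ν x) :
    (∑ x, |μ x - ν x|) ^ 2 ≤ 2 * klNats μ ν := by
  set f := fun x => |μ x - ν x| / Real.sqrt (2 * μ x + 4 * ν x) with hf
  set g := fun x => Real.sqrt (2 * μ x + 4 * ν x) with hg
  have hw0 : ∀ x, 0 ≤ 2 * μ x + 4 * ν x := fun x => by nlinarith [hμ0 x, hν0 x]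
  have hfg : ∀ x, f x * g x = |μ x - ν x| := by
    intro x
    by_cases h : 2 * μ x + 4 * ν x = 0
    · have hμx : μ x = 0 := by nlinarith [hμ0 x, hν0 x]
      have hνx : ν x = 0 := by nlinarith [hμ0 x, hν0 x]
      simp [hf, hg, hμx, hνx]
    · have hs : Real.sqrt (2 * μ x + 4 * ν x) ≠ 0 := by
        simpa [Real.sqrt_eq_zero'] using lt_of_le_of_ne (hw0 x) (Ne.symm h)
      simp only [hf, hg]
      rw [div_mul_cancel₀ _ hs]
  have CS := Finset.sum_mul_sq_le_sq_mul_sq Finset.univ f g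
  have hEq : ∑ x, f x * g x = ∑ x, |μ x - ν x| :=
    Finset.sum_congr rfl fun x _ => hfg x
  rw [hEq] at CS
  have hg2 : ∑ x, g x ^ 2 = 6 := by
    have : ∀ x, g x ^ 2 = 2 * μ x + 4 * ν x := fun x => Real.sq_sqrt (hw0 x)
    rw [Finset.sum_congr rfl fun x _ => this x]
    rw [Finset.sum_add_distrib, ← Finset.mul_sum, ← Finset.mul_sum, hμ1, hν1]
    norm_num
  have hf2 : ∑ x, f x ^ 2 ≤ klNats μ ν / 3 := by
    have hpt : ∀ x, f x ^ 2 ≤ (μ x * Real.log (μ x / ν x) - μ x + ν x) / 3 := by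
      intro x
      by_cases hν : ν x = 0
      · have hμx : μ x = 0 := by
          by_contra hm
          exact absurd (hac x (lt_of_le_of_ne (hμ0 x) (Ne.symm hm))) (by simp [hν])
        simp [hf, hμx, hν]
      · have hνp : 0 < ν x := lt_of_le_of_ne (hν0 x) (Ne.symm hν)
        have hwp : 0 < 2 * μ x + 4 * ν x := by nlinarith [hμ0 x]
        have key := pinsker_pointwise (hμ0 x) hνp
        have hfx : f x ^ 2 = (μ x - ν x) ^ 2 / (2 * μ x + 4 * ν x) := by
          simp only [hf]
          rw [div_pow, Real.sq_sqrt (hw0 x), sq_abs]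
        rw [hfx, div_le_div_iff₀ hwp (by norm_num : (0:ℝ) < 3)]
        nlinarith [key]
    calc ∑ x, f x ^ 2 ≤ ∑ x, (μ x * Real.log (μ x / ν x) - μ x + ν x) / 3 :=
          Finset.sum_le_sum fun x _ => hpt x
      _ = klNats μ ν / 3 := by
          rw [← Finset.sum_div]
          congr 1
          rw [Finset.sum_add_distrib, Finset.sum_sub_distrib, hμ1, hν1]
          simp [klNats]
  calc (∑ x, |μ x - ν x|) ^ 2 ≤ (∑ x, f x ^ 2) * ∑ x, g x ^ 2 := CS
    _ ≤ klNats μ ν / 3 * 6 := by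
        rw [hg2]
        exact mul_le_mul_of_nonneg_right hf2 (by norm_num)
    _ = 2 * klNats μ ν := by ring

/-- finite Bretagnolle–Huber inequality, squared form. -/
lemma bh_sq (μ ν : α → ℝ) (hμ0 : ∀ x, 0 ≤ μ x) (hν0 : ∀ x, 0 ≤ ν x)
    (hμ1 : ∑ x, μ x = 1) (hν1 : ∑ x, ν x = 1) (hac : ∀ x, 0 < μ x → 0 < ν x) :
    (∑ x, |μ x - ν x|) ^ 2 ≤ 4 * (1 - Real.exp (-klNats μ ν)) := by
  set ρ := ∑ x, Real.sqrt (μ x * ν x) with hρ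
  have hs0 : ∀ x, 0 ≤ Real.sqrt (μ x * ν x) := fun x => Real.sqrt_nonneg _
  have hρpos : 0 < ρ := by
    obtain ⟨x0, hx0⟩ : ∃ x, 0 < μ x := by
      by_contra h
      push_neg at h
      have : ∑ x, μ x ≤ 0 := Finset.sum_nonpos fun x _ => h x
      linarith
    have hν0x := hac x0 hx0
    have hterm : 0 < Real.sqrt (μ x0 * ν x0) := Real.sqrt_pos.2 (mul_pos hx0 hν0x)
    calc (0:ℝ) < Real.sqrt (μ x0 * ν x0) := hterm
      _ ≤ ρ := Finset.single_le_sum (fun x _ => hs0 x) (Finset.mem_univ x0)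
  -- Step A: (∑ |μ - ν|)^2 ≤ 4 * (1 - ρ^2)
  set f := fun x => |Real.sqrt (μ x) - Real.sqrt (ν x)| with hfd
  set g := fun x => Real.sqrt (μ x) + Real.sqrt (ν x) with hgd
  have hfg : ∀ x, f x * g x = |μ x - ν x| := by
    intro x
    have hgn : 0 ≤ g x := add_nonneg (Real.sqrt_nonneg _) (Real.sqrt_nonneg _)
    simp only [hfd, hgd]
    rw [← abs_of_nonneg (add_nonneg (Real.sqrt_nonneg (μ x)) (Real.sqrt_nonneg (ν x))),
      ← abs_mul]
    congr 1
    have h1 := Real.sq_sqrt (hμ0 x)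
    have h2 := Real.sq_sqrt (hν0 x)
    have hgn' : g x = Real.sqrt (μ x) + Real.sqrt (ν x) := rfl
    linear_combination h1 - h2
  have CS := Finset.sum_mul_sq_le_sq_mul_sq Finset.univ f g
  rw [Finset.sum_congr rfl fun x _ => hfg x] at CS
  have hmul : ∀ x, Real.sqrt (μ x) * Real.sqrt (ν x) = Real.sqrt (μ x * ν x) :=
    fun x => (Real.sqrt_mul (hμ0 x) (ν x)).symm
  have hf2 : ∑ x, f x ^ 2 = 2 - 2 * ρ := by
    have : ∀ x, f x ^ 2 = μ x + ν x - 2 * Real.sqrt (μ x * ν x) := by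
      intro x
      simp only [hfd, sq_abs]
      have h1 := Real.sq_sqrt (hμ0 x)
      have h2 := Real.sq_sqrt (hν0 x)
      have h3 := hmul x
      linear_combination h1 + h2 - 2 * h3
    rw [Finset.sum_congr rfl fun x _ => this x, Finset.sum_sub_distrib,
      Finset.sum_add_distrib, hμ1, hν1, ← Finset.mul_sum, ← hρ]
    ring
  have hg2 : ∑ x, g x ^ 2 = 2 + 2 * ρ := by
    have : ∀ x, g x ^ 2 = μ x + ν x + 2 * Real.sqrt (μ x * ν x) := by
      intro x
      simp only [hgd]
      have h1 := Real.sq_sqrt (hμ0 x)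
      have h2 := Real.sq_sqrt (hν0 x)
      have h3 := hmul x
      linear_combination h1 + h2 + 2 * h3
    rw [Finset.sum_congr rfl fun x _ => this x, Finset.sum_add_distrib,
      Finset.sum_add_distrib, hμ1, hν1, ← Finset.mul_sum, ← hρ]
    ring
  rw [hf2, hg2] at CS
  -- Step B: exp (-KL) ≤ ρ^2
  have hB : Real.exp (-klNats μ ν) ≤ ρ ^ 2 := by
    have hlog : -klNats μ ν ≤ 2 * Real.log ρ := by
      have hpt : ∀ x, -(μ x * Real.log (μ x / ν x)) ≤
          2 * (μ x * Real.log ρ + Real.sqrt (μ x * ν x) / ρ - μ x) := by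
        intro x
        by_cases hμx : μ x = 0
        · simp [hμx]
        · have hμp : 0 < μ x := lt_of_le_of_ne (hμ0 x) (Ne.symm hμx)
          have hνp : 0 < ν x := hac x hμp
          have hsp : 0 < Real.sqrt (μ x * ν x) := Real.sqrt_pos.2 (mul_pos hμp hνp)
          set s := Real.sqrt (μ x * ν x) with hsd
          have hs2 : s ^ 2 = μ x * ν x := Real.sq_sqrt (le_of_lt (mul_pos hμp hνp))
          -- -log(μ/ν) = 2 log (s/μ)
          have h1 : -Real.log (μ x / ν x) = 2 * Real.log (s / μ x) := by
            have : (s / μ x) ^ 2 = ν x / μ x := by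
              rw [div_pow, hs2]
              field_simp
            have h2 : Real.log ((s / μ x) ^ 2) = 2 * Real.log (s / μ x) := by
              rw [Real.log_pow]
              push_cast
              ring
            rw [← h2, this, ← Real.log_inv]
            congr 1
            rw [inv_div]
          -- log (s/μ) ≤ log ρ + s/(μρ) - 1
          have h3 : Real.log (s / μ x) - Real.log ρ ≤ s / (μ x * ρ) - 1 := by
            have hq : 0 < s / μ x / ρ := by positivity
            have := Real.log_le_sub_one_of_pos hq
            rw [Real.log_div (by positivity) hρpos.ne'] at this
            calc Real.log (s / μ x) - Real.log ρ = Real.log (s / μ x / ρ) := by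
                  rw [Real.log_div (by positivity) hρpos.ne']
              _ ≤ s / μ x / ρ - 1 := Real.log_le_sub_one_of_pos hq
              _ = s / (μ x * ρ) - 1 := by rw [div_div]
          have h4 : μ x * (s / (μ x * ρ)) = s / ρ := by field_simp
          have h5 : μ x * Real.log (s / μ x) ≤ μ x * Real.log ρ + s / ρ - μ x := by
            have := mul_le_mul_of_nonneg_left h3 (le_of_lt hμp)
            rw [mul_sub, mul_sub, h4] at this
            linarith
          calc -(μ x * Real.log (μ x / ν x)) = μ x * (-Real.log (μ x / ν x)) := by ring
            _ = μ x * (2 * Real.log (s / μ x)) := by rw [h1]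
            _ = 2 * (μ x * Real.log (s / μ x)) := by ring
            _ ≤ 2 * (μ x * Real.log ρ + s / ρ - μ x) := by linarith
      have hsum : -klNats μ ν ≤
          ∑ x, 2 * (μ x * Real.log ρ + Real.sqrt (μ x * ν x) / ρ - μ x) := by
        have : -klNats μ ν = ∑ x, -(μ x * Real.log (μ x / ν x)) := by
          simp [klNats]
        rw [this]
        exact Finset.sum_le_sum fun x _ => hpt x
      have hsum2 : ∑ x, 2 * (μ x * Real.log ρ + Real.sqrt (μ x * ν x) / ρ - μ x)
          = 2 * Real.log ρ := by
        have : ∀ x, 2 * (μ x * Real.log ρ + Real.sqrt (μ x * ν x) / ρ - μ x)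
            = 2 * Real.log ρ * μ x + 2 / ρ * Real.sqrt (μ x * ν x) - 2 * μ x := by
          intro x; ring
        rw [Finset.sum_congr rfl fun x _ => this x, Finset.sum_sub_distrib,
          Finset.sum_add_distrib, ← Finset.mul_sum, ← Finset.mul_sum, ← Finset.mul_sum,
          hμ1, ← hρ]
        field_simp
        ring
      linarith [hsum2 ▸ hsum]
    calc Real.exp (-klNats μ ν) ≤ Real.exp (2 * Real.log ρ) := Real.exp_le_exp.2 hlog
      _ = ρ ^ 2 := by
        rw [show (2:ℝ) * Real.log ρ = Real.log ρ + Real.log ρ by ring, Real.exp_add,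
          Real.exp_log hρpos]
        ring
  calc (∑ x, |μ x - ν x|) ^ 2 ≤ (2 - 2 * ρ) * (2 + 2 * ρ) := CS
    _ = 4 * (1 - ρ ^ 2) := by ring
    _ ≤ 4 * (1 - Real.exp (-klNats μ ν)) := by nlinarith [hB]




/-- KL decomposition along a convex combination. -/
lemma kl_split {H : Type*} [Fintype H] (u v p : H → ℝ) (hu : ∀ h, 0 ≤ u h)
    (hv : ∀ h, 0 ≤ v h) (hp : ∀ h, 0 < p h) {t : ℝ} (ht0 : 0 < t) (ht1 : t < 1) :
    klNats (fun h => (1 - t) * u h + t * v h) p =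
      (1 - t) * (klNats u p - klNats u (fun h => (1 - t) * u h + t * v h))
      + t * (klNats v p - klNats v (fun h => (1 - t) * u h + t * v h)) := by
  unfold klNats
  beta_reduce
  rw [← Finset.sum_sub_distrib, ← Finset.sum_sub_distrib, Finset.mul_sum,
    Finset.mul_sum, ← Finset.sum_add_distrib]
  apply Finset.sum_congr rfl
  intro h _
  have h1t : 0 < 1 - t := by linarith
  set w := (1 - t) * u h + t * v h with hw
  have key : ∀ a : ℝ, 0 ≤ a → 0 < w →
      a * Real.log (a / p h) - a * Real.log (a / w) = a * Real.log (w / p h) := by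
    intro a ha hwp
    rcases eq_or_lt_of_le ha with h0 | ha'
    · simp [← h0]
    · rw [Real.log_div ha'.ne' (hp h).ne', Real.log_div ha'.ne' hwp.ne',
        Real.log_div hwp.ne' (hp h).ne']
      ring
  by_cases hw0 : w = 0
  · have hu0 : u h = 0 := by nlinarith [hu h, hv h]
    have hv0 : v h = 0 := by nlinarith [hu h, hv h]
    rw [hw, hu0, hv0]
    simp
  · have hwp : 0 < w := lt_of_le_of_ne (by nlinarith [hu h, hv h]) (Ne.symm hw0)
    rw [key (u h) (hu h) hwp, key (v h) (hv h) hwp, hw]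
    ring

/-- losses bounded in `[0, Lmax]` give a total-variation bound. -/
lemma loss_tv {H : Type*} [Fintype H] (d l : H → ℝ) (Lmax : ℝ)
    (hsum : ∑ h, d h = 0) (hl : ∀ h, 0 ≤ l h ∧ l h ≤ Lmax) :
    ∑ h, d h * l h ≤ Lmax / 2 * ∑ h, |d h| := by
  have hpt : ∀ h, d h * l h ≤ (|d h| + d h) / 2 * Lmax := by
    intro h
    rcases le_or_gt 0 (d h) with h0 | h0
    · rw [abs_of_nonneg h0]
      calc d h * l h ≤ d h * Lmax := mul_le_mul_of_nonneg_left (hl h).2 h0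
        _ = (d h + d h) / 2 * Lmax := by ring
    · rw [abs_of_neg h0]
      calc d h * l h ≤ 0 := by nlinarith [(hl h).1]
        _ = (-d h + d h) / 2 * Lmax := by ring
  calc ∑ h, d h * l h ≤ ∑ h, (|d h| + d h) / 2 * Lmax :=
        Finset.sum_le_sum fun h _ => hpt h
    _ = Lmax / 2 * ∑ h, |d h| := by
        have : ∀ h, (|d h| + d h) / 2 * Lmax = Lmax / 2 * |d h| + Lmax / 2 * d h :=
          fun h => by ring
        rw [Finset.sum_congr rfl fun h _ => this h, Finset.sum_add_distrib,
          ← Finset.mul_sum, ← Finset.mul_sum, hsum]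
        ring

end DRB2Aux

open DRB2Aux in
/-- **Distortion-rate bound for scheme 2** (Lemma 2, Eq. (10)): if `Q̂` minimizes
the expected divergence `𝓡` over a convex set of learning rules containing `Q`,
the available rate `R` splits as `𝓡(Q̂) = R − I(S;Ŝ|Ĥ)` where `I(S;Ŝ|Ĥ)` is the
conditional mutual information of the joint law of `(S, Ŝ, Ĥ)` with Markov
chain `S → Ŝ → Ĥ` (scheme 2), and `Δ_R = 𝓡(Q) − R`, then
`d_sem(Q, Q̂) ≤ L_max · min{√((Δ_R + I(S;Ŝ|Ĥ))/2), √(1 − e^{−(Δ_R + I(S;Ŝ|Ĥ))})}`. -/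
theorem distortion_rate_bound_scheme2
    {C S H : Type*} [Fintype C] [Fintype S] [Fintype H]
    [Nonempty C] [Nonempty S] [Nonempty H]
    (PC : C → ℝ) (hPC : IsPMF PC)
    (PSC : C → S → ℝ) (hPSC : ∀ c, IsPMF (PSC c))
    (PCS : C → S → ℝ) (hPCS : PCS = fun c s => PC c * PSC c s)
    (Lmax : ℝ) (L : C → H → ℝ) (hL : ∀ c h, 0 ≤ L c h ∧ L c h ≤ Lmax)
    (PH : H → ℝ) (hPH : IsPMF PH) (hPHpos : ∀ h, 0 < PH h)
    (𝒬 : Set (S → H → ℝ)) (h𝒬conv : Convex ℝ 𝒬)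
    (h𝒬rule : ∀ Q' ∈ 𝒬, IsRule Q')
    (Q : S → H → ℝ) (hQmem : Q ∈ 𝒬)
    (Qhat : S → H → ℝ) (hQhatmem : Qhat ∈ 𝒬)
    (hmin : ∀ Q' ∈ 𝒬, rateOf PCS PH Qhat ≤ rateOf PCS PH Q')
    -- scheme 2: joint law of `(S, Ŝ, Ĥ)` with `Ŝ` the intermediate dataset
    -- reconstruction, forming a Markov chain `S → Ŝ → Ĥ`
    {S' : Type*} [Fintype S'] [Nonempty S']
    (PJ : S → S' → H → ℝ) (hPJ0 : ∀ s t u, 0 ≤ PJ s t u)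
    (hPJ1 : ∑ s, ∑ t, ∑ u, PJ s t u = 1)
    (hMarkov : ∀ s t u, PJ s t u * (∑ s', ∑ u', PJ s' t u') =
      (∑ u', PJ s t u') * (∑ s', PJ s' t u))
    (R : ℝ) (hsplit : rateOf PCS PH Qhat = R - condMI PJ)
    (ΔR : ℝ) (hΔR : ΔR = rateOf PCS PH Q - R) :
    dsem PCS L Q Qhat ≤
      Lmax * min (Real.sqrt ((ΔR + condMI PJ) / 2))
        (Real.sqrt (1 - Real.exp (-(ΔR + condMI PJ)))) := by
  obtain ⟨hPC0, hPC1⟩ := hPC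
  have hQr : IsRule Q := h𝒬rule Q hQmem
  have hQhr : IsRule Qhat := h𝒬rule Qhat hQhatmem
  have hPCS0 : ∀ c s, 0 ≤ PCS c s := by
    intro c s; rw [hPCS]; exact mul_nonneg (hPC0 c) ((hPSC c).1 s)
  have hPCS1 : ∑ c, ∑ s, PCS c s = 1 := by
    rw [hPCS]
    have h1 : ∀ c : C, ∑ s, PC c * PSC c s = PC c := by
      intro c; rw [← Finset.mul_sum, (hPSC c).2, mul_one]
    calc ∑ c, ∑ s, PC c * PSC c s = ∑ c, PC c :=
          Finset.sum_congr rfl fun c _ => h1 c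
      _ = 1 := hPC1
  have hLmax0 : 0 ≤ Lmax :=
    le_trans (hL (Classical.arbitrary C) (Classical.arbitrary H)).1
      (hL (Classical.arbitrary C) (Classical.arbitrary H)).2
  -- joint-sum helper
  have hsum_prod : ∀ f : C → S → H → ℝ,
      ∑ x : C × S × H, f x.1 x.2.1 x.2.2 = ∑ c, ∑ s, ∑ h, f c s h := by
    intro f
    rw [Fintype.sum_prod_type]
    exact Finset.sum_congr rfl fun c _ => by rw [Fintype.sum_prod_type]
  have hmarg : ∀ W : S → H → ℝ, (∀ s, ∑ h, W s h = 1) →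
      ∑ c, ∑ s, ∑ h, PCS c s * W s h = 1 := by
    intro W hW
    have h1 : ∀ c s, ∑ h, PCS c s * W s h = PCS c s := by
      intro c s; rw [← Finset.mul_sum, hW s, mul_one]
    calc ∑ c, ∑ s, ∑ h, PCS c s * W s h = ∑ c, ∑ s, PCS c s :=
          Finset.sum_congr rfl fun c _ => Finset.sum_congr rfl fun s _ => h1 c s
      _ = 1 := hPCS1
  set rq := rateOf PCS PH Q with hrq
  set rh := rateOf PCS PH Qhat with hrh
  have hDeq : ΔR + condMI PJ = rq - rh := by rw [hΔR, hsplit]; ring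
  rw [hDeq]
  set D := rq - rh with hDdef
  have hD0 : 0 ≤ D := by
    rw [hDdef]
    have hmq := hmin Q hQmem
    rw [← hrq] at hmq
    linarith
  set M := min (Real.sqrt (D / 2)) (Real.sqrt (1 - Real.exp (-D))) with hM
  have hM0 : 0 ≤ M := le_min (Real.sqrt_nonneg _) (Real.sqrt_nonneg _)
  have key : ∀ t : ℝ, 0 < t → t < 1 →
      (1 - t) * dsem PCS L Q Qhat ≤ Lmax * M := by
    intro t ht0 ht1
    have h1t : 0 < 1 - t := by linarith
    set Qt : S → H → ℝ := fun s h => (1 - t) * Qhat s h + t * Q s h with hQtd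
    have hQtmem : Qt ∈ 𝒬 := by
      have hmem := h𝒬conv hQhatmem hQmem (le_of_lt h1t) (le_of_lt ht0) (by ring)
      convert hmem using 1
      ext s h
      simp [hQtd]
    have hQt0 : ∀ s h, 0 ≤ Qt s h := by
      intro s h
      have h1 := (hQhr s).1 h; have h2 := (hQr s).1 h
      simp only [hQtd]; nlinarith
    have hQt1 : ∀ s, ∑ h, Qt s h = 1 := by
      intro s
      simp only [hQtd]
      rw [Finset.sum_add_distrib, ← Finset.mul_sum, ← Finset.mul_sum,
        (hQhr s).2, (hQr s).2]
      ring
    have hQtsuppQ : ∀ s h, 0 < Q s h → 0 < Qt s h := by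
      intro s h hq
      have h1 := (hQhr s).1 h
      simp only [hQtd]; nlinarith
    have hQtsuppQh : ∀ s h, 0 < Qhat s h → 0 < Qt s h := by
      intro s h hq
      have h2 := (hQr s).1 h
      simp only [hQtd]; nlinarith
    have hks : ∀ s, klNats (Qt s) PH =
        (1 - t) * (klNats (Qhat s) PH - klNats (Qhat s) (Qt s))
        + t * (klNats (Q s) PH - klNats (Q s) (Qt s)) := by
      intro s
      have h := kl_split (Qhat s) (Q s) PH ((hQhr s).1) ((hQr s).1) hPHpos ht0 ht1
      simpa [hQtd] using h
    set K := ∑ c, ∑ s, PCS c s * klNats (Q s) (Qt s) with hK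
    set A := ∑ c, ∑ s, PCS c s * klNats (Qhat s) (Qt s) with hA
    have hA0 : 0 ≤ A := by
      rw [hA]
      exact Finset.sum_nonneg fun c _ => Finset.sum_nonneg fun s _ =>
        mul_nonneg (hPCS0 c s)
          (klNats_nonneg _ _ ((hQhr s).1) (hQt0 s) (hQhr s).2 (hQt1 s) (hQtsuppQh s))
    have hterm : ∀ c s, PCS c s * klNats (Qt s) PH =
        ((1 - t) * (PCS c s * klNats (Qhat s) PH) + t * (PCS c s * klNats (Q s) PH))
        - ((1 - t) * (PCS c s * klNats (Qhat s) (Qt s))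
            + t * (PCS c s * klNats (Q s) (Qt s))) := by
      intro c s; rw [hks s]; ring
    have hrate : rateOf PCS PH Qt = ((1 - t) * rh + t * rq) - ((1 - t) * A + t * K) := by
      have e1 : rateOf PCS PH Qt = ∑ c, ∑ s,
          (((1 - t) * (PCS c s * klNats (Qhat s) PH) + t * (PCS c s * klNats (Q s) PH))
          - ((1 - t) * (PCS c s * klNats (Qhat s) (Qt s))
              + t * (PCS c s * klNats (Q s) (Qt s)))) :=
        Finset.sum_congr rfl fun c _ => Finset.sum_congr rfl fun s _ => hterm c s
      rw [e1, hrh, hrq, hA, hK]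
      simp only [rateOf, Finset.sum_sub_distrib, Finset.sum_add_distrib, ← Finset.mul_sum]
    have hKD : K ≤ D := by
      have hmin' := hmin Qt hQtmem
      rw [hrate] at hmin'
      have h2 : t * K ≤ t * D := by
        rw [hDdef]
        nlinarith [mul_nonneg (le_of_lt h1t) hA0]
      exact le_of_mul_le_mul_left h2 ht0
    -- joint distributions on C × S × H
    set μJ : C × S × H → ℝ := fun x => PCS x.1 x.2.1 * Q x.2.1 x.2.2 with hμJ
    set νJ : C × S × H → ℝ := fun x => PCS x.1 x.2.1 * Qt x.2.1 x.2.2 with hνJ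
    have hμ0 : ∀ x, 0 ≤ μJ x := fun x => mul_nonneg (hPCS0 _ _) ((hQr _).1 _)
    have hν0 : ∀ x, 0 ≤ νJ x := fun x => mul_nonneg (hPCS0 _ _) (hQt0 _ _)
    have hμ1 : ∑ x, μJ x = 1 := by
      rw [hμJ, hsum_prod (fun c s h => PCS c s * Q s h)]
      exact hmarg Q fun s => (hQr s).2
    have hν1 : ∑ x, νJ x = 1 := by
      rw [hνJ, hsum_prod (fun c s h => PCS c s * Qt s h)]
      exact hmarg Qt hQt1
    have hacJ : ∀ x, 0 < μJ x → 0 < νJ x := by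
      intro x hx
      simp only [hμJ] at hx
      simp only [hνJ]
      obtain h1 | h1 := (hPCS0 x.1 x.2.1).lt_or_eq
      · obtain h2 | h2 := ((hQr x.2.1).1 x.2.2).lt_or_eq
        · exact mul_pos h1 (hQtsuppQ _ _ h2)
        · rw [← h2, mul_zero] at hx; exact absurd hx (lt_irrefl 0)
      · rw [← h1, zero_mul] at hx; exact absurd hx (lt_irrefl 0)
    have hKLJ : klNats μJ νJ = K := by
      have e1 : klNats μJ νJ = ∑ c, ∑ s, ∑ h,
          PCS c s * Q s h * Real.log ((PCS c s * Q s h) / (PCS c s * Qt s h)) := by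
        simp only [klNats, hμJ, hνJ]
        exact hsum_prod (fun c s h =>
          PCS c s * Q s h * Real.log ((PCS c s * Q s h) / (PCS c s * Qt s h)))
      rw [e1, hK]
      apply Finset.sum_congr rfl; intro c _
      apply Finset.sum_congr rfl; intro s _
      by_cases hcs : PCS c s = 0
      · simp [hcs, klNats]
      · rw [klNats, Finset.mul_sum]
        apply Finset.sum_congr rfl; intro h _
        rw [mul_div_mul_left _ _ hcs]
        ring
    set T := ∑ x, |μJ x - νJ x| with hT
    have hT0 : 0 ≤ T := Finset.sum_nonneg fun x _ => abs_nonneg _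
    have hTP : T ^ 2 ≤ 2 * K := by
      have h := pinsker_sq μJ νJ hμ0 hν0 hμ1 hν1 hacJ
      rw [hKLJ] at h; exact h
    have hTB : T ^ 2 ≤ 4 * (1 - Real.exp (-K)) := by
      have h := bh_sq μJ νJ hμ0 hν0 hμ1 hν1 hacJ
      rw [hKLJ] at h; exact h
    have hsq4 : Real.sqrt 4 = 2 := by
      rw [show (4 : ℝ) = 2 ^ 2 by norm_num, Real.sqrt_sq (by norm_num : (0:ℝ) ≤ 2)]
    have hT1 : T ≤ 2 * Real.sqrt (D / 2) := by
      calc T = Real.sqrt (T ^ 2) := (Real.sqrt_sq hT0).symm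
        _ ≤ Real.sqrt (4 * (D / 2)) := Real.sqrt_le_sqrt (by linarith)
        _ = 2 * Real.sqrt (D / 2) := by
            rw [Real.sqrt_mul (by norm_num : (0:ℝ) ≤ 4), hsq4]
    have hT2 : T ≤ 2 * Real.sqrt (1 - Real.exp (-D)) := by
      have hexp : Real.exp (-D) ≤ Real.exp (-K) := Real.exp_le_exp.2 (by linarith)
      calc T = Real.sqrt (T ^ 2) := (Real.sqrt_sq hT0).symm
        _ ≤ Real.sqrt (4 * (1 - Real.exp (-D))) := Real.sqrt_le_sqrt (by linarith)
        _ = 2 * Real.sqrt (1 - Real.exp (-D)) := by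
            rw [Real.sqrt_mul (by norm_num : (0:ℝ) ≤ 4), hsq4]
    have hTM : T ≤ 2 * M := by
      rcases le_total (Real.sqrt (D / 2)) (Real.sqrt (1 - Real.exp (-D))) with h | h
      · rw [hM, min_eq_left h]; exact hT1
      · rw [hM, min_eq_right h]; exact hT2
    -- distortion bound
    have hloss : ∀ c s, (1 - t) * (trueLoss L c (Qhat s) - trueLoss L c (Q s))
        = ∑ h, (Qt s h - Q s h) * L c h := by
      intro c s
      simp only [trueLoss, hQtd]
      rw [← Finset.sum_sub_distrib, Finset.mul_sum]
      apply Finset.sum_congr rfl; intro h _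
      ring
    have hd1 : (1 - t) * dsem PCS L Q Qhat
        = ∑ c, ∑ s, PCS c s * ∑ h, (Qt s h - Q s h) * L c h := by
      simp only [dsem]
      rw [Finset.mul_sum]
      apply Finset.sum_congr rfl; intro c _
      rw [Finset.mul_sum]
      apply Finset.sum_congr rfl; intro s _
      rw [← hloss c s]
      ring
    have hd2 : ∀ c s, PCS c s * ∑ h, (Qt s h - Q s h) * L c h
        ≤ PCS c s * (Lmax / 2 * ∑ h, |Qt s h - Q s h|) := by
      intro c s
      refine mul_le_mul_of_nonneg_left ?_ (hPCS0 c s)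
      refine loss_tv _ _ _ ?_ (fun h => hL c h)
      rw [Finset.sum_sub_distrib, hQt1 s, (hQr s).2]
      ring
    have hTalt : T = ∑ c, ∑ s, ∑ h, PCS c s * |Qt s h - Q s h| := by
      calc T = ∑ x : C × S × H, PCS x.1 x.2.1 * |Qt x.2.1 x.2.2 - Q x.2.1 x.2.2| := by
            rw [hT]
            apply Finset.sum_congr rfl; intro x _
            simp only [hμJ, hνJ]
            rw [← mul_sub, abs_mul, abs_of_nonneg (hPCS0 _ _), abs_sub_comm]
        _ = ∑ c, ∑ s, ∑ h, PCS c s * |Qt s h - Q s h| :=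
            hsum_prod (fun c s h => PCS c s * |Qt s h - Q s h|)
    have hd3 : ∑ c, ∑ s, PCS c s * (Lmax / 2 * ∑ h, |Qt s h - Q s h|)
        = Lmax / 2 * T := by
      rw [hTalt, Finset.mul_sum]
      apply Finset.sum_congr rfl; intro c _
      rw [Finset.mul_sum]
      apply Finset.sum_congr rfl; intro s _
      rw [← Finset.mul_sum]
      ring
    calc (1 - t) * dsem PCS L Q Qhat
        = ∑ c, ∑ s, PCS c s * ∑ h, (Qt s h - Q s h) * L c h := hd1
      _ ≤ ∑ c, ∑ s, PCS c s * (Lmax / 2 * ∑ h, |Qt s h - Q s h|) :=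
          Finset.sum_le_sum fun c _ => Finset.sum_le_sum fun s _ => hd2 c s
      _ = Lmax / 2 * T := hd3
      _ ≤ Lmax / 2 * (2 * M) := mul_le_mul_of_nonneg_left hTM (by positivity)
      _ = Lmax * M := by ring
  -- pass to the limit t → 0 (elementary argument)
  set dv := dsem PCS L Q Qhat with hdv
  set B := Lmax * M with hB
  have hB0 : 0 ≤ B := mul_nonneg hLmax0 hM0
  rcases le_or_gt dv 0 with hneg | hpos
  · exact le_trans hneg hB0
  · by_contra hcon
    push_neg at hcon
    set t0 := (dv - B) / (2 * dv) with ht0d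
    have ht0 : 0 < t0 := div_pos (by linarith) (by linarith)
    have ht1 : t0 < 1 := by
      rw [ht0d, div_lt_one (by linarith)]
      linarith
    have hk := key t0 ht0 ht1
    have htv : t0 * dv = (dv - B) / 2 := by
      rw [ht0d]
      field_simp
    have hexp : (1 - t0) * dv = dv - t0 * dv := by ring
    rw [hexp, htv] at hk
    linarith
end
end
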